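/- arXiv:1002.4388 — 10 statements merged into one kernel-verified Lean document; each statement's English description precedes it below -/
import Mathlib

section
/- (Strong duality for quantum state discrimination.) For every discrimination problem (ρ_x)_{x∈X} on ℂ^n (with X nonempty), the maximum guessing probability over all POVMs equals the minimum of Re Tr(σ) over all Hermitian matrices σ such that σ − ρ_x is positive semidefinite for every x ∈ X; in particular this minimum is attained. -/
open scoped ComplexOrder
open Matrix

namespace QSD
variable {n : ℕ}

lemma psd_trace_nonneg {M : Matrix (Fin n) (Fin n) ℂ} (hM : M.PosSemidef) : 0 ≤ M.trace := by
  rw [Matrix.trace]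
  apply Finset.sum_nonneg
  intro i _
  have := hM.dotProduct_mulVec_nonneg (Pi.single i 1)
  simpa [Matrix.mulVec_single_one, dotProduct, Pi.single_apply, apply_ite] using this

lemma psd_trace_mul_nonneg {A B : Matrix (Fin n) (Fin n) ℂ} (hA : A.PosSemidef)
    (hB : B.PosSemidef) : 0 ≤ (A * B).trace := by
  obtain ⟨S, hS, hSS⟩ : ∃ S : Matrix (Fin n) (Fin n) ℂ, S.PosSemidef ∧ S * S = A := by
    open scoped MatrixOrder in
    exact ⟨CFC.sqrt A, (CFC.sqrt_nonneg A).posSemidef, CFC.sqrt_mul_sqrt_self A hA.nonneg⟩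
  have h1 : A * B = S * (S * B) := by
    rw [← mul_assoc, hSS]
  have h2 : (A * B).trace = (S * B * S).trace := by
    rw [h1, Matrix.trace_mul_comm, mul_assoc]
  rw [h2]
  have h3 : (S * B * S).PosSemidef := by
    have := hB.mul_mul_conjTranspose_same S
    rwa [hS.isHermitian.eq] at this
  exact psd_trace_nonneg h3

lemma trace_vecMulVec_mul (v : Fin n → ℂ) (M : Matrix (Fin n) (Fin n) ℂ) :
    (vecMulVec v (star v) * M).trace = star v ⬝ᵥ M *ᵥ v := by
  simp only [Matrix.trace, Matrix.diag, Matrix.mul_apply, vecMulVec_apply, dotProduct,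
    Matrix.mulVec, Pi.star_apply]
  rw [Finset.sum_comm]
  congr 1; ext k
  rw [Finset.mul_sum]
  congr 1; ext i
  ring

lemma posSemidef_vecMulVec (v : Fin n → ℂ) : (vecMulVec v (star v)).PosSemidef := by
  have h : vecMulVec v (star v) = Matrix.replicateCol (Fin 1) v * (Matrix.replicateCol (Fin 1) v)ᴴ := by
    ext i j
    simp [vecMulVec_apply, Matrix.mul_apply, Matrix.replicateCol, Matrix.conjTranspose_apply]
  rw [h]
  exact posSemidef_self_mul_conjTranspose _

lemma vecMulVec_mul_vecMulVec (v : Fin n → ℂ) (hv : star v ⬝ᵥ v = 1) :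
    vecMulVec v (star v) * vecMulVec v (star v) = vecMulVec v (star v) := by
  ext i j
  simp only [Matrix.mul_apply, vecMulVec_apply, Pi.star_apply]
  have : ∀ k ∈ Finset.univ, v i * star (v k) * (v k * star (v j))
      = (star (v k) * v k) * (v i * star (v j)) := by intro k _; ring
  rw [Finset.sum_congr rfl this, ← Finset.sum_mul]
  rw [show (∑ k, star (v k) * v k) = star v ⬝ᵥ v from rfl, hv, one_mul]

lemma psd_smul {M : Matrix (Fin n) (Fin n) ℂ} (hM : M.PosSemidef) {r : ℝ} (hr : 0 ≤ r) :
    ((r : ℂ) • M).PosSemidef := by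
  refine Matrix.PosSemidef.of_dotProduct_mulVec_nonneg ?_ ?_
  · rw [Matrix.IsHermitian, Matrix.conjTranspose_smul, hM.1.eq]
    simp
  · intro x
    rw [Matrix.smul_mulVec, dotProduct_smul]
    have h0 : (0:ℂ) ≤ (r:ℂ) := by
      rw [Complex.le_def]; simp [hr]
    exact mul_nonneg h0 (hM.dotProduct_mulVec_nonneg x)

lemma herm_form_real {M : Matrix (Fin n) (Fin n) ℂ} (hM : M.IsHermitian) (v : Fin n → ℂ) :
    star (star v ⬝ᵥ M *ᵥ v) = star v ⬝ᵥ M *ᵥ v := by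
  calc star (star v ⬝ᵥ M *ᵥ v) = star (M *ᵥ v) ⬝ᵥ star (star v) :=
        (star_dotProduct_star _ _).symm
    _ = (star v ᵥ* Mᴴ) ⬝ᵥ v := by rw [Matrix.star_mulVec, star_star]
    _ = (star v ᵥ* M) ⬝ᵥ v := by rw [hM.eq]
    _ = star v ⬝ᵥ M *ᵥ v := (dotProduct_mulVec _ _ _).symm

lemma psd_diag_nonneg {M : Matrix (Fin n) (Fin n) ℂ} (hM : M.PosSemidef) (i : Fin n) :
    0 ≤ M i i := by
  have := hM.dotProduct_mulVec_nonneg (Pi.single i 1)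
  simpa [Matrix.mulVec_single_one, dotProduct, Pi.single_apply, apply_ite] using this

lemma psd_entry_norm_le {M : Matrix (Fin n) (Fin n) ℂ} (hM : M.PosSemidef)
    (h1 : ∀ i, (M i i).re ≤ 1) (i j : Fin n) : ‖M i j‖ ≤ 1 := by
  rcases eq_or_ne i j with rfl | hij
  · have h0 := psd_diag_nonneg hM i
    rw [Complex.le_def] at h0
    rw [show M i i = ((M i i).re : ℂ) by
      apply Complex.ext <;> simp [h0.2.symm]]
    rw [Complex.norm_real, Real.norm_eq_abs, abs_of_nonneg (by simpa using h0.1)]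
    exact h1 i
  rcases eq_or_ne (M i j) 0 with h0 | h0
  · simp [h0]
  set a := M i j with ha
  set c : ℂ := -(star a) / (‖a‖ : ℝ) with hc
  have hna : ((‖a‖ : ℝ) : ℂ) ≠ 0 := by simpa using h0
  have habs : ((‖a‖ : ℝ) : ℂ) * ((‖a‖ : ℝ) : ℂ) = a * (starRingEnd ℂ) a := by
    rw [Complex.mul_conj, Complex.normSq_eq_norm_sq]
    push_cast
    ring
  have hac : a * c = -((‖a‖ : ℝ) : ℂ) := by
    rw [hc]
    field_simp
    simp only [Complex.star_def]
    linear_combination habs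
  have hcc : star c * c = 1 := by
    rw [hc]
    simp only [star_div₀, star_neg, star_star, Complex.star_def, Complex.conj_ofReal]
    field_simp
    simp only [Complex.conj_conj]
    linear_combination -habs
  have hstar : star c * star a = -((‖a‖ : ℝ) : ℂ) := by
    rw [mul_comm, ← star_mul', hac]
    simp
  have hji : M j i = star a := by
    rw [ha, ← Matrix.conjTranspose_apply, hM.1.eq]
  set v : Fin n → ℂ := Pi.single i 1 + Pi.single j c with hv
  have hq := hM.dotProduct_mulVec_nonneg v
  have hqe : star v ⬝ᵥ M *ᵥ v = M i i + M j j - 2 * (‖a‖ : ℝ) := by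
    have hMv : M *ᵥ v = (fun k => M k i) + (fun k => M k j * c) := by
      rw [hv, Matrix.mulVec_add, Matrix.mulVec_single_one, Matrix.mulVec_single]
      rfl
    have hsv : star v = Pi.single i 1 + Pi.single j (star c) := by
      rw [hv]
      ext k
      simp [Pi.single_apply, apply_ite (star : ℂ → ℂ)]
    rw [hsv, hMv, add_dotProduct, single_dotProduct, single_dotProduct]
    simp only [Pi.add_apply]
    rw [hji, ← ha]
    linear_combination hac + hstar + M j j * hcc
  rw [Complex.le_def, hqe] at hq
  have h2 := hq.1
  simp only [Complex.sub_re, Complex.add_re, Complex.zero_re, Complex.mul_re,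
    Complex.ofReal_re, Complex.ofReal_im] at h2
  have := h1 i
  have := h1 j
  norm_num at h2
  linarith

lemma isClosed_psd : IsClosed {M : Matrix (Fin n) (Fin n) ℂ | M.PosSemidef} := by
  have h1 : {M : Matrix (Fin n) (Fin n) ℂ | M.PosSemidef}
      = {M | M.IsHermitian} ∩ ⋂ v : Fin n → ℂ, {M | 0 ≤ star v ⬝ᵥ M *ᵥ v} := by
    ext M
    simp only [Set.mem_setOf_eq, Set.mem_inter_iff, Set.mem_iInter]
    exact ⟨fun h => ⟨h.1, h.dotProduct_mulVec_nonneg⟩, fun h => Matrix.PosSemidef.of_dotProduct_mulVec_nonneg h.1 h.2⟩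
  rw [h1]
  apply IsClosed.inter
  · have : {M : Matrix (Fin n) (Fin n) ℂ | M.IsHermitian}
        = {M | Mᴴ = M} := rfl
    rw [this]
    exact isClosed_eq (continuous_id.matrix_conjTranspose) continuous_id
  · apply isClosed_iInter
    intro v
    have hc : Continuous fun M : Matrix (Fin n) (Fin n) ℂ => star v ⬝ᵥ M *ᵥ v :=
      (continuous_const).dotProduct (continuous_id.matrix_mulVec continuous_const)
    have hcl : IsClosed {z : ℂ | 0 ≤ z} := by
      have : {z : ℂ | 0 ≤ z} = Complex.re ⁻¹' (Set.Ici 0) ∩ Complex.im ⁻¹' {0} := by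
        ext z
        simp [Complex.le_def, eq_comm]
      rw [this]
      exact (isClosed_Ici.preimage Complex.continuous_re).inter
        (isClosed_singleton.preimage Complex.continuous_im)
    exact hcl.preimage hc

variable {X : Type*} [Fintype X]

lemma isCompact_povm :
    IsCompact {E : X → Matrix (Fin n) (Fin n) ℂ | (∀ x, (E x).PosSemidef) ∧ ∑ x, E x = 1} := by
  have hT : IsCompact {E : X → Matrix (Fin n) (Fin n) ℂ |
      ∀ x i j, E x i j ∈ Metric.closedBall (0:ℂ) 1} := by
    have heq : {E : X → Matrix (Fin n) (Fin n) ℂ | ∀ x i j, E x i j ∈ Metric.closedBall (0:ℂ) 1}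
        = Set.univ.pi (fun _ : X => (Set.univ.pi (fun _ : Fin n =>
            Set.univ.pi (fun _ : Fin n => Metric.closedBall (0:ℂ) 1))
              : Set (Matrix (Fin n) (Fin n) ℂ))) := by
      ext E
      simp only [Set.mem_setOf_eq]
      exact ⟨fun h x _ i _ j _ => h x i j, fun h x i j => h x trivial i trivial j trivial⟩
    rw [heq]
    apply isCompact_univ_pi
    intro _
    apply isCompact_univ_pi
    intro _
    apply isCompact_univ_pi
    intro _
    exact isCompact_closedBall 0 1
  apply IsCompact.of_isClosed_subset hT
  · have c1 : IsClosed {E : X → Matrix (Fin n) (Fin n) ℂ | ∀ x, (E x).PosSemidef} := by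
      have h : {E : X → Matrix (Fin n) (Fin n) ℂ | ∀ x, (E x).PosSemidef}
          = ⋂ x, (fun E : X → Matrix (Fin n) (Fin n) ℂ => E x) ⁻¹'
              {M : Matrix (Fin n) (Fin n) ℂ | M.PosSemidef} := by
        ext E; simp
      rw [h]
      exact isClosed_iInter fun x => isClosed_psd.preimage (continuous_apply x)
    have c2 : IsClosed {E : X → Matrix (Fin n) (Fin n) ℂ | ∑ x, E x = 1} :=
      isClosed_eq (continuous_finset_sum _ fun x _ => continuous_apply x) continuous_const
    exact c1.inter c2
  · rintro E ⟨hE, hE1⟩ 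
    intro x i j
    rw [Metric.mem_closedBall, dist_zero_right]
    apply psd_entry_norm_le (hE x)
    intro k
    have hsum : ∑ y, ((E y) k k).re = 1 := by
      have : (∑ y, E y) k k = (1 : Matrix (Fin n) (Fin n) ℂ) k k := by rw [hE1]
      rw [Matrix.sum_apply, Matrix.one_apply_eq] at this
      calc ∑ y, ((E y) k k).re = (∑ y, (E y) k k).re := by rw [Complex.re_sum]
        _ = (1:ℂ).re := by rw [this]
        _ = 1 := Complex.one_re
    have hnn : ∀ y ∈ Finset.univ, 0 ≤ ((E y) k k).re := by
      intro y _
      have := psd_diag_nonneg (hE y) k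
      rw [Complex.le_def] at this
      simpa using this.1
    calc ((E x) k k).re ≤ ∑ y, ((E y) k k).re :=
          Finset.single_le_sum hnn (Finset.mem_univ x)
      _ = 1 := hsum

lemma expand_one {n : ℕ} (A B P : Matrix (Fin n) (Fin n) ℂ) (ε : ℝ) :
    (1 - (ε:ℂ) • P) * A * (1 - (ε:ℂ) • P) * B
      = A * B - (ε:ℂ) • (P * (A * B)) - (ε:ℂ) • (A * (P * B))
        + ((ε:ℂ) * (ε:ℂ)) • (P * (A * (P * B))) := by
  simp only [Matrix.sub_mul, Matrix.mul_sub, one_mul, mul_one,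
    Matrix.smul_mul, Matrix.mul_smul, smul_smul, mul_assoc]
  module

lemma perturb_mem {n : ℕ} {X : Type*} [Fintype X] [DecidableEq X]
    (E : X → Matrix (Fin n) (Fin n) ℂ) (hE : ∀ x, (E x).PosSemidef) (hE1 : ∑ x, E x = 1)
    (P : Matrix (Fin n) (Fin n) ℂ) (hP : P.PosSemidef) (hPP : P * P = P)
    (y : X) (ε : ℝ) (hε0 : 0 ≤ ε) (hε1 : ε ≤ 1) :
    (∀ x, (((1 - (ε:ℂ) • P) * E x * (1 - (ε:ℂ) • P)
        + (if x = y then (((2*ε - ε^2 : ℝ)) : ℂ) • P else 0)).PosSemidef)) ∧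
      (∑ x, ((1 - (ε:ℂ) • P) * E x * (1 - (ε:ℂ) • P)
        + (if x = y then (((2*ε - ε^2 : ℝ)) : ℂ) • P else 0))) = 1 := by
  have hGH : (1 - (ε:ℂ) • P)ᴴ = 1 - (ε:ℂ) • P := by
    rw [Matrix.conjTranspose_sub, Matrix.conjTranspose_smul,
      Matrix.conjTranspose_one, hP.1.eq, Complex.star_def, Complex.conj_ofReal]
  have hc : (0:ℝ) ≤ 2*ε - ε^2 := by nlinarith
  constructor
  · intro x
    have base := (hE x).mul_mul_conjTranspose_same (1 - (ε:ℂ) • P)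
    rw [hGH] at base
    by_cases h : x = y
    · rw [if_pos h]
      exact base.add (psd_smul hP hc)
    · rw [if_neg h]
      rw [add_zero]
      exact base
  · rw [Finset.sum_add_distrib, Finset.sum_ite_eq' Finset.univ y, if_pos (Finset.mem_univ y)]
    have h1 : ∑ x, (1 - (ε:ℂ) • P) * E x * (1 - (ε:ℂ) • P)
        = (1 - (ε:ℂ) • P) * (1 - (ε:ℂ) • P) := by
      rw [← Finset.sum_mul, ← Finset.mul_sum, hE1, mul_one]
    rw [h1]
    have expand : ((1 : Matrix (Fin n) (Fin n) ℂ) - (ε : ℂ) • P) *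
        ((1 : Matrix (Fin n) (Fin n) ℂ) - (ε : ℂ) • P)
        = 1 - (2*(ε:ℂ) - (ε:ℂ)^2) • P := by
      simp only [Matrix.sub_mul, Matrix.mul_sub, one_mul, mul_one,
        Matrix.smul_mul, Matrix.mul_smul, smul_smul, hPP]
      module
    rw [expand]
    have : ((((2*ε - ε^2 : ℝ)) : ℂ)) • P = (2*(ε:ℂ) - (ε:ℂ)^2) • P := by
      push_cast
      rfl
    rw [this]
    module

lemma perturb_val {n : ℕ} {X : Type*} [Fintype X] [DecidableEq X]
    (ρ E : X → Matrix (Fin n) (Fin n) ℂ) (P : Matrix (Fin n) (Fin n) ℂ) (y : X) (ε : ℝ)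
    (hρh : ∀ x, (ρ x).IsHermitian) (hEh : ∀ x, (E x).IsHermitian) (hPh : Pᴴ = P) :
    ∑ x, ((((1 - (ε:ℂ) • P) * E x * (1 - (ε:ℂ) • P)
        + (if x = y then (((2*ε - ε^2 : ℝ)) : ℂ) • P else 0)) * ρ x).trace).re
      = ∑ x, ((E x * ρ x).trace).re
        - 2*ε*((P * ∑ x, E x * ρ x).trace).re
        + ε^2 * (∑ x, (P * (E x * (P * ρ x))).trace).re
        + (2*ε - ε^2) * ((P * ρ y).trace).re := by
  have hterm : ∀ x, (((1 - (ε:ℂ) • P) * E x * (1 - (ε:ℂ) • P)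
        + (if x = y then (((2*ε - ε^2 : ℝ)) : ℂ) • P else 0)) * ρ x).trace
      = ((E x * ρ x).trace - (ε:ℂ) * (P * (E x * ρ x)).trace
          - (ε:ℂ) * (E x * (P * ρ x)).trace
          + ((ε:ℂ) * (ε:ℂ)) * (P * (E x * (P * ρ x))).trace)
        + (if x = y then (((2*ε - ε^2 : ℝ)) : ℂ) * (P * ρ y).trace else 0) := by
    intro x
    rw [Matrix.add_mul, Matrix.trace_add, expand_one]
    congr 1
    · rw [Matrix.trace_add, Matrix.trace_sub, Matrix.trace_sub,
        Matrix.trace_smul, Matrix.trace_smul, Matrix.trace_smul]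
      simp [smul_eq_mul]
    · by_cases h : x = y
      · rw [if_pos h, if_pos h, Matrix.smul_mul, Matrix.trace_smul, smul_eq_mul, h]
      · rw [if_neg h, if_neg h, Matrix.zero_mul, Matrix.trace_zero]
  rw [Finset.sum_congr rfl fun x _ => congrArg Complex.re (hterm x)]
  rw [← Complex.re_sum, Finset.sum_add_distrib,
    Finset.sum_ite_eq' Finset.univ y, if_pos (Finset.mem_univ y)]
  have hz : ∑ x, ((E x * ρ x).trace - (ε:ℂ) * (P * (E x * ρ x)).trace
          - (ε:ℂ) * (E x * (P * ρ x)).trace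
          + ((ε:ℂ) * (ε:ℂ)) * (P * (E x * (P * ρ x))).trace)
      = (∑ x, (E x * ρ x).trace) - (ε:ℂ) * (∑ x, (P * (E x * ρ x)).trace)
        - (ε:ℂ) * (∑ x, (E x * (P * ρ x)).trace)
        + ((ε:ℂ) * (ε:ℂ)) * (∑ x, (P * (E x * (P * ρ x))).trace) := by
    rw [Finset.sum_add_distrib, Finset.sum_sub_distrib, Finset.sum_sub_distrib,
      Finset.mul_sum, Finset.mul_sum, Finset.mul_sum]
  rw [hz]
  have hPsum : ∑ x, (P * (E x * ρ x)).trace = (P * ∑ x, E x * ρ x).trace := by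
    rw [← Matrix.trace_sum, ← Finset.mul_sum]
  have hT2 : ∑ x, (E x * (P * ρ x)).trace = star ((P * ∑ x, E x * ρ x).trace) := by
    have h1 : ∀ x, (E x * (P * ρ x)).trace = (P * (ρ x * E x)).trace := by
      intro x
      rw [Matrix.trace_mul_comm, mul_assoc]
    rw [Finset.sum_congr rfl fun x _ => h1 x, ← Matrix.trace_sum, ← Finset.mul_sum]
    have h2 : ∑ x, ρ x * E x = (∑ x, E x * ρ x)ᴴ := by
      rw [Matrix.conjTranspose_sum]
      exact Finset.sum_congr rfl fun x _ => by
        rw [Matrix.conjTranspose_mul, (hρh x).eq, (hEh x).eq]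
    rw [h2]
    have h3 : P * (∑ x, E x * ρ x)ᴴ = ((∑ x, E x * ρ x) * P)ᴴ := by
      rw [Matrix.conjTranspose_mul, hPh]
    rw [h3, Matrix.trace_conjTranspose, Matrix.trace_mul_comm]
  rw [hPsum, hT2, ← Complex.re_sum,
    show ((ε:ℂ) * (ε:ℂ)) = (((ε*ε : ℝ)):ℂ) by push_cast; ring]
  set z1 : ℂ := ∑ x, (E x * ρ x).trace
  set z2 : ℂ := (P * ∑ x, E x * ρ x).trace
  set z3 : ℂ := ∑ x, (P * (E x * (P * ρ x))).trace
  set z4 : ℂ := (P * ρ y).trace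
  simp only [Complex.add_re, Complex.sub_re, Complex.re_ofReal_mul, Complex.mul_re,
    Complex.ofReal_re, Complex.ofReal_im, Complex.star_def, Complex.conj_re, Complex.conj_im]
  ring

end QSD

open QSD

set_option maxHeartbeats 2000000 in
/-- Strong duality for quantum state discrimination: the maximum guessing probability
over all POVMs equals the minimum of `Re Tr σ` over all Hermitian `σ` with `σ - ρ x`
positive semidefinite for every `x`; in particular this minimum is attained. -/
theorem qsd_strong_duality {n : ℕ} {X : Type*} [Fintype X] [Nonempty X]
    (ρ : X → Matrix (Fin n) (Fin n) ℂ)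
    (hρ : ∀ x, (ρ x).PosSemidef)
    (hρtr : (∑ x, (ρ x).trace) = 1) :
    ∃ σ : Matrix (Fin n) (Fin n) ℂ,
      σ.IsHermitian ∧ (∀ x, (σ - ρ x).PosSemidef) ∧
      (∀ σ' : Matrix (Fin n) (Fin n) ℂ, σ'.IsHermitian →
        (∀ x, (σ' - ρ x).PosSemidef) → (σ.trace).re ≤ (σ'.trace).re) ∧
      (σ.trace).re =
        sSup {p : ℝ | ∃ E : X → Matrix (Fin n) (Fin n) ℂ,
          (∀ x, (E x).PosSemidef) ∧ (∑ x, E x) = 1 ∧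
          p = ∑ x, ((E x * ρ x).trace).re} := by
  classical
  set val : (X → Matrix (Fin n) (Fin n) ℂ) → ℝ :=
    fun E => ∑ x, ((E x * ρ x).trace).re with hval
  set K : Set (X → Matrix (Fin n) (Fin n) ℂ) :=
    {E | (∀ x, (E x).PosSemidef) ∧ ∑ x, E x = 1} with hKdef
  -- K nonempty
  have hKne : K.Nonempty := by
    refine ⟨fun _ => (((Fintype.card X : ℝ)⁻¹ : ℝ) : ℂ) • 1, ?_, ?_⟩
    · intro x
      exact psd_smul Matrix.PosSemidef.one (inv_nonneg.mpr (Nat.cast_nonneg _))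
    · rw [Finset.sum_const, Finset.card_univ, ← Nat.cast_smul_eq_nsmul ℂ, smul_smul]
      have hcard : ((Fintype.card X : ℂ)) * (((Fintype.card X : ℝ)⁻¹ : ℝ) : ℂ) = 1 := by
        have h0 : (Fintype.card X : ℝ) ≠ 0 :=
          Nat.cast_ne_zero.mpr Fintype.card_ne_zero
        push_cast
        field_simp
      rw [hcard, one_smul]
  -- val continuous
  have hcont : Continuous val :=
    continuous_finset_sum _ fun x _ =>
      Complex.continuous_re.comp (((continuous_apply x).matrix_mul continuous_const).matrix_trace)
  obtain ⟨E, hEK, hEmax⟩ := isCompact_povm.exists_isMaxOn hKne hcont.continuousOn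
  obtain ⟨hE, hE1⟩ := hEK
  set σ₁ : Matrix (Fin n) (Fin n) ℂ := ∑ x, E x * ρ x with hσ₁
  set σ : Matrix (Fin n) (Fin n) ℂ := (2⁻¹ : ℂ) • (σ₁ + σ₁ᴴ) with hσdef
  have hσherm : σ.IsHermitian := by
    rw [Matrix.IsHermitian, hσdef, Matrix.conjTranspose_smul, Matrix.conjTranspose_add,
      Matrix.conjTranspose_conjTranspose]
    rw [show star (2⁻¹ : ℂ) = (2⁻¹ : ℂ) by norm_num]
    rw [add_comm]
  have htrσ : σ.trace.re = val E := by
    rw [hσdef, Matrix.trace_smul, Matrix.trace_add, Matrix.trace_conjTranspose]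
    rw [show star σ₁.trace = (starRingEnd ℂ) σ₁.trace from rfl, Complex.add_conj]
    rw [smul_eq_mul]
    push_cast
    rw [show (2⁻¹ : ℂ) * (2 * (σ₁.trace.re : ℂ)) = (σ₁.trace.re : ℂ) by ring]
    rw [Complex.ofReal_re, hσ₁, Matrix.trace_sum, Complex.re_sum]
  -- weak duality
  have hweak : ∀ σ' : Matrix (Fin n) (Fin n) ℂ, (∀ x, (σ' - ρ x).PosSemidef) →
      ∀ F, F ∈ K → val F ≤ σ'.trace.re := by
    intro σ' hfeas F hF
    obtain ⟨hFp, hF1⟩ := hF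
    have hsum : ∑ x, (F x * σ').trace = σ'.trace := by
      rw [← Matrix.trace_sum, ← Finset.sum_mul, hF1, one_mul]
    have hterm : ∀ x, ((F x * ρ x).trace).re
        = ((F x * σ').trace).re - ((F x * (σ' - ρ x)).trace).re := by
      intro x
      have h : F x * σ' - F x * (σ' - ρ x) = F x * ρ x := by
        rw [Matrix.mul_sub]
        abel
      rw [← h, Matrix.trace_sub, Complex.sub_re]
    calc val F = ∑ x, (((F x * σ').trace).re - ((F x * (σ' - ρ x)).trace).re) :=
          Finset.sum_congr rfl fun x _ => hterm x
      _ ≤ ∑ x, ((F x * σ').trace).re := by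
          apply Finset.sum_le_sum
          intro x _
          have h := psd_trace_mul_nonneg (hFp x) (hfeas x)
          rw [Complex.le_def] at h
          simp only [Complex.zero_re] at h
          linarith [h.1]
      _ = σ'.trace.re := by rw [← Complex.re_sum, hsum]
  -- dual feasibility of σ (the perturbation argument)
  have hfeasσ : ∀ y, (σ - ρ y).PosSemidef := by
    intro y
    have hherm : (σ - ρ y).IsHermitian := hσherm.sub (hρ y).1
    refine Matrix.PosSemidef.of_dotProduct_mulVec_nonneg hherm ?_
    have key : ∀ v : Fin n → ℂ, star v ⬝ᵥ v = 1 →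
        0 ≤ star v ⬝ᵥ (σ - ρ y) *ᵥ v := by
      intro v hv
      set P : Matrix (Fin n) (Fin n) ℂ := vecMulVec v (star v) with hPdef
      have hP : P.PosSemidef := posSemidef_vecMulVec v
      have hPP : P * P = P := vecMulVec_mul_vecMulVec v hv
      set a : ℝ := ((P * σ₁).trace).re with hadef
      set b : ℝ := ((P * ρ y).trace).re with hbdef
      set R : ℝ := (∑ x, (P * (E x * (P * ρ x))).trace).re with hRdef
      have main : ∀ ε : ℝ, 0 < ε → ε ≤ 1 → ε * (2 * (b - a)) ≤ ε * (ε * (b - R)) := by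
        intro ε hε0 hε1
        obtain ⟨hFp, hF1⟩ := perturb_mem E hE hE1 P hP hPP y ε hε0.le hε1
        have hle : val (fun x => (1 - (ε:ℂ) • P) * E x * (1 - (ε:ℂ) • P)
            + (if x = y then (((2*ε - ε^2 : ℝ)) : ℂ) • P else 0)) ≤ val E :=
          hEmax (Set.mem_setOf.mpr ⟨hFp, hF1⟩)
        have hid := perturb_val ρ E P y ε (fun x => (hρ x).1) (fun x => (hE x).1) hP.1.eq
        rw [hval] at hle
        simp only at hle
        rw [hid] at hle
        rw [← hσ₁] at hle
        rw [← hadef, ← hbdef, ← hRdef] at hle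
        have hvalE : ∑ x, ((E x * ρ x).trace).re = val E := rfl
        rw [hvalE] at hle
        nlinarith [hle]
      have hba : b ≤ a := by
        by_contra hcon
        push_neg at hcon
        set c0 : ℝ := b - R with hc0
        set ε : ℝ := min 1 ((b - a)/(|c0|+1)) with hεdef
        have habs : (0:ℝ) < |c0| + 1 := by positivity
        have hε0 : 0 < ε := by
          apply lt_min one_pos
          exact div_pos (by linarith) habs
        have hε1 : ε ≤ 1 := min_le_left _ _
        have h1 := main ε hε0 hε1
        have h2 := le_of_mul_le_mul_left h1 hε0
        have h3 : ε * c0 ≤ ε * |c0| :=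
          mul_le_mul_of_nonneg_left (le_abs_self c0) (le_of_lt hε0)
        have h4 : ε * |c0| ≤ (b - a)/(|c0|+1) * |c0| :=
          mul_le_mul_of_nonneg_right (min_le_right _ _) (abs_nonneg c0)
        have h5 : (b - a)/(|c0|+1) * |c0| < b - a := by
          rw [div_mul_eq_mul_div, div_lt_iff₀ habs]
          nlinarith [abs_nonneg c0]
        linarith
      -- conclude
      have hq : star v ⬝ᵥ (σ - ρ y) *ᵥ v = (P * (σ - ρ y)).trace :=
        (trace_vecMulVec_mul v _).symm
      have hqre : ((P * (σ - ρ y)).trace).re = (2⁻¹ * ((P * σ₁).trace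
          + (P * σ₁ᴴ).trace)).re - b := by
        rw [Matrix.mul_sub, Matrix.trace_sub, Complex.sub_re, hσdef]
        congr 2
        rw [Matrix.mul_smul, Matrix.trace_smul, Matrix.mul_add, Matrix.trace_add]
        simp
      have hstarre : ((P * σ₁ᴴ).trace).re = a := by
        have h1 : P * σ₁ᴴ = (σ₁ * P)ᴴ := by
          rw [Matrix.conjTranspose_mul, hP.1.eq]
        rw [h1, Matrix.trace_conjTranspose, Matrix.trace_mul_comm]
        exact Complex.conj_re _
      have him : (star v ⬝ᵥ (σ - ρ y) *ᵥ v).im = 0 := by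
        have h := herm_form_real hherm v
        have : (starRingEnd ℂ) (star v ⬝ᵥ (σ - ρ y) *ᵥ v) = star v ⬝ᵥ (σ - ρ y) *ᵥ v := h
        rw [Complex.conj_eq_iff_im] at this
        exact this
      rw [Complex.le_def, hq]
      constructor
      · rw [hqre]
        have h2 : ((2⁻¹ : ℂ) * ((P * σ₁).trace + (P * σ₁ᴴ).trace)).re
            = 2⁻¹ * (((P * σ₁).trace).re + ((P * σ₁ᴴ).trace).re) := by
          simp [Complex.mul_re, Complex.add_re]
        rw [h2, hstarre, ← hadef]
        simp only [Complex.zero_re]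
        linarith [hba]
      · rw [← hq]
        simp [him]
    -- extend to all vectors
    intro w
    rcases eq_or_ne w 0 with rfl | hw
    · simp
    set s : ℝ := ∑ k, Complex.normSq (w k) with hsdef
    have hs : 0 < s := by
      obtain ⟨k, hk⟩ := Function.ne_iff.mp hw
      apply Finset.sum_pos'
      · intro k _; exact Complex.normSq_nonneg _
      · exact ⟨k, Finset.mem_univ k, by simpa [Complex.normSq_pos] using hk⟩
    set c : ℝ := (Real.sqrt s)⁻¹ with hcdef
    have hsq : Real.sqrt s ≠ 0 := by positivity
    have hcsR : c * c * s = 1 := by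
      rw [hcdef]
      have h := Real.sqrt_pos.mpr hs
      have h' := Real.mul_self_sqrt hs.le
      field_simp
      nlinarith
    have hcs : (c:ℂ) * (c:ℂ) * (s:ℂ) = 1 := by exact_mod_cast hcsR
    have hwdot : star w ⬝ᵥ w = (s : ℂ) := by
      rw [hsdef]
      push_cast
      simp only [dotProduct, Pi.star_apply]
      congr 1
      ext k
      rw [Complex.star_def, mul_comm, Complex.mul_conj]
    set v : Fin n → ℂ := (c:ℂ) • w with hvdef
    have hv1 : star v ⬝ᵥ v = 1 := by
      rw [hvdef, star_smul, smul_dotProduct, dotProduct_smul, hwdot]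
      rw [show star ((c:ℂ)) = (c:ℂ) by rw [Complex.star_def, Complex.conj_ofReal]]
      rw [smul_eq_mul, smul_eq_mul, ← mul_assoc, hcs]
    have hrel : star v ⬝ᵥ (σ - ρ y) *ᵥ v
        = (c:ℂ) * (c:ℂ) * (star w ⬝ᵥ (σ - ρ y) *ᵥ w) := by
      rw [hvdef, star_smul, smul_dotProduct, Matrix.mulVec_smul,
        dotProduct_smul]
      rw [show star ((c:ℂ)) = (c:ℂ) by rw [Complex.star_def, Complex.conj_ofReal]]
      rw [smul_eq_mul, smul_eq_mul, mul_assoc]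
    have h0 := key v hv1
    rw [hrel] at h0
    have hfin : star w ⬝ᵥ (σ - ρ y) *ᵥ w
        = (s:ℂ) * ((c:ℂ) * (c:ℂ) * (star w ⬝ᵥ (σ - ρ y) *ᵥ w)) := by
      rw [← mul_assoc, show (s:ℂ) * ((c:ℂ) * (c:ℂ)) = 1 by rw [← hcs]; ring, one_mul]
    rw [hfin]
    apply mul_nonneg _ h0
    rw [Complex.le_def]
    constructor
    · simp [le_of_lt hs]
    · simp
  -- conclusion
  refine ⟨σ, hσherm, hfeasσ, ?_, ?_⟩
  · intro σ' hherm' hfeas'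
    rw [htrσ]
    exact hweak σ' hfeas' E ⟨hE, hE1⟩
  · have hgreat : IsGreatest {p : ℝ | ∃ E : X → Matrix (Fin n) (Fin n) ℂ,
        (∀ x, (E x).PosSemidef) ∧ (∑ x, E x) = 1 ∧
        p = ∑ x, ((E x * ρ x).trace).re} (val E) := by
      constructor
      · exact ⟨E, hE, hE1, rfl⟩
      · rintro p ⟨F, hFp, hF1, rfl⟩
        exact hEmax (⟨hFp, hF1⟩ : F ∈ K)
    rw [htrσ, hgreat.csSup_eq]
end

section
/- (Uniqueness of the Lagrange operator as dual minimizer.) If σ₁ and σ₂ are both Hermitian feasible matrices for a discrimination problem (ρ_x)_{x∈X} (i.e. σ_i − ρ_x is positive semidefinite for all x) and both attain the minimal trace among all feasible Hermitian matrices, then σ₁ = σ₂. -/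
open scoped ComplexOrder

namespace QSDAux

open Matrix Finset

variable {n : ℕ}

lemma dot_star_self_re (u : Fin n → ℂ) :
    (star u ⬝ᵥ u) = ((∑ i, Complex.normSq (u i) : ℝ) : ℂ) := by
  simp [dotProduct, Complex.normSq_eq_conj_mul_self, Pi.star_apply]

lemma q_factor (M N : Matrix (Fin n) (Fin n) ℂ) (v : Fin n → ℂ) :
    star v ⬝ᵥ (Mᴴ * N) *ᵥ v = star (M *ᵥ v) ⬝ᵥ (N *ᵥ v) := by
  rw [← mulVec_mulVec, dotProduct_mulVec, ← star_mulVec]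

lemma herm_q_star {M : Matrix (Fin n) (Fin n) ℂ} (hM : M.IsHermitian) (v : Fin n → ℂ) :
    (starRingEnd ℂ) (star v ⬝ᵥ M *ᵥ v) = star v ⬝ᵥ M *ᵥ v := by
  have h1 : star (star v ⬝ᵥ M *ᵥ v) = star (M *ᵥ v) ⬝ᵥ v := by
    rw [star_dotProduct, star_star]
  rw [show (starRingEnd ℂ) (star v ⬝ᵥ M *ᵥ v) = star (star v ⬝ᵥ M *ᵥ v) from rfl, h1,
    star_mulVec, ← dotProduct_mulVec, hM.eq]

lemma herm_q_eq_re {M : Matrix (Fin n) (Fin n) ℂ} (hM : M.IsHermitian) (v : Fin n → ℂ) :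
    star v ⬝ᵥ M *ᵥ v = (((star v ⬝ᵥ M *ᵥ v).re : ℝ) : ℂ) :=
  (Complex.conj_eq_iff_re.mp (herm_q_star hM v)).symm

lemma posSemidef_of_herm_re {M : Matrix (Fin n) (Fin n) ℂ} (hM : M.IsHermitian)
    (h : ∀ v, 0 ≤ (star v ⬝ᵥ M *ᵥ v).re) : M.PosSemidef := by
  refine .of_dotProduct_mulVec_nonneg hM fun v => ?_
  rw [herm_q_eq_re hM v]
  exact_mod_cast (Complex.zero_le_real).2 (h v)

lemma row_bound (B : Matrix (Fin n) (Fin n) ℂ) (w : Fin n → ℂ) (i : Fin n) :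
    Complex.normSq ((B *ᵥ w) i) ≤ (∑ j, Complex.normSq (B i j)) * (∑ j, Complex.normSq (w j)) := by
  have h1 : ‖(B *ᵥ w) i‖ ≤ ∑ j, ‖B i j‖ * ‖w j‖ := by
    simpa [mulVec, dotProduct, _root_.map_mul] using norm_sum_le Finset.univ (fun j => B i j * w j)
  have h2 : (∑ j, ‖B i j‖ * ‖w j‖) ^ 2 ≤
      (∑ j, ‖B i j‖ ^ 2) * (∑ j, ‖w j‖ ^ 2) :=
    Finset.sum_mul_sq_le_sq_mul_sq _ _ _
  calc Complex.normSq ((B *ᵥ w) i) = ‖(B *ᵥ w) i‖ ^ 2 := (Complex.sq_norm _).symm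
    _ ≤ (∑ j, ‖B i j‖ * ‖w j‖) ^ 2 := by
        apply pow_le_pow_left₀ (norm_nonneg _) h1
    _ ≤ (∑ j, ‖B i j‖ ^ 2) * (∑ j, ‖w j‖ ^ 2) := h2
    _ = (∑ j, Complex.normSq (B i j)) * (∑ j, Complex.normSq (w j)) := by
        simp [Complex.sq_norm]

section
open scoped MatrixOrder
lemma psd_sqrt_aux {A : Matrix (Fin n) (Fin n) ℂ} (hA : A.PosSemidef) :
    ∃ S : Matrix (Fin n) (Fin n) ℂ, Sᴴ = S ∧ S * S = A :=
  ⟨CFC.sqrt A, (CFC.sqrt_nonneg A).posSemidef.isHermitian, CFC.sqrt_mul_sqrt_self A hA.nonneg⟩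
end

lemma psd_eq_ct_mul_aux {A : Matrix (Fin n) (Fin n) ℂ} (hA : A.PosSemidef) :
    ∃ B : Matrix (Fin n) (Fin n) ℂ, A = Bᴴ * B := by
  obtain ⟨S, hS, hSS⟩ := psd_sqrt_aux hA
  exact ⟨S, by rw [hS, hSS]⟩

lemma trace_re_rep (A : Matrix (Fin n) (Fin n) ℂ) :
    (Aᴴ * A).trace.re = ∑ i, ∑ j, Complex.normSq (A j i) := by
  simp [Matrix.trace, Matrix.diag, Matrix.mul_apply, Complex.re_sum, Complex.normSq_apply]

lemma trace_re_nonneg {A : Matrix (Fin n) (Fin n) ℂ} (hA : A.PosSemidef) : 0 ≤ A.trace.re := by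
  obtain ⟨B, rfl⟩ := psd_eq_ct_mul_aux hA
  rw [trace_re_rep]
  exact Finset.sum_nonneg fun i _ => Finset.sum_nonneg fun j _ => Complex.normSq_nonneg _

lemma q_le_trace {A : Matrix (Fin n) (Fin n) ℂ} (hA : A.PosSemidef) (w : Fin n → ℂ) :
    (star w ⬝ᵥ A *ᵥ w).re ≤ A.trace.re * ∑ j, Complex.normSq (w j) := by
  obtain ⟨B, rfl⟩ := psd_eq_ct_mul_aux hA
  rw [q_factor, dot_star_self_re, Complex.ofReal_re, trace_re_rep]
  calc (∑ i, Complex.normSq ((B *ᵥ w) i))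
      ≤ ∑ i, (∑ j, Complex.normSq (B i j)) * (∑ j, Complex.normSq (w j)) :=
        Finset.sum_le_sum fun i _ => row_bound B w i
    _ = (∑ i, ∑ j, Complex.normSq (B j i)) * (∑ j, Complex.normSq (w j)) := by
        rw [← Finset.sum_mul, Finset.sum_comm]

lemma herm_sq_q {D : Matrix (Fin n) (Fin n) ℂ} (hD : D.IsHermitian) (v : Fin n → ℂ) :
    (star v ⬝ᵥ (D * D) *ᵥ v).re = ∑ i, Complex.normSq ((D *ᵥ v) i) := by
  conv_lhs => rw [show D * D = Dᴴ * D by rw [hD.eq]]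
  rw [q_factor, dot_star_self_re, Complex.ofReal_re]

lemma q_sq_le {A : Matrix (Fin n) (Fin n) ℂ} (hA : A.PosSemidef) (v : Fin n → ℂ) :
    (star v ⬝ᵥ (A * A) *ᵥ v).re ≤ A.trace.re * (star v ⬝ᵥ A *ᵥ v).re := by
  obtain ⟨S, hSH, hS⟩ : ∃ S : Matrix (Fin n) (Fin n) ℂ, Sᴴ = S ∧ S * S = A :=
    psd_sqrt_aux hA
  have h1 : A * A = Sᴴ * (A * S) := by rw [hSH, ← hS]; simp [Matrix.mul_assoc]
  have h2 : star v ⬝ᵥ (A * A) *ᵥ v = star (S *ᵥ v) ⬝ᵥ A *ᵥ (S *ᵥ v) := by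
    rw [h1, q_factor, mulVec_mulVec]
  have h3 : star (S *ᵥ v) ⬝ᵥ (S *ᵥ v) = star v ⬝ᵥ A *ᵥ v := by
    rw [← q_factor, hSH, hS]
  have h4 := q_le_trace hA (S *ᵥ v)
  have h5 : (∑ j, Complex.normSq ((S *ᵥ v) j) : ℝ) = (star v ⬝ᵥ A *ᵥ v).re := by
    rw [← h3, dot_star_self_re, Complex.ofReal_re]
  rw [h2]
  rw [h5] at h4
  exact h4

noncomputable def en (u : Fin n → ℂ) : ℝ := Real.sqrt (∑ i, Complex.normSq (u i))

lemma en_nonneg (u : Fin n → ℂ) : 0 ≤ en u := Real.sqrt_nonneg _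

lemma en_sq (u : Fin n → ℂ) : en u ^ 2 = ∑ i, Complex.normSq (u i) :=
  Real.sq_sqrt (Finset.sum_nonneg fun _ _ => Complex.normSq_nonneg _)

lemma en_eq_norm (u : Fin n → ℂ) : en u = ‖(WithLp.equiv 2 (Fin n → ℂ)).symm u‖ := by
  rw [EuclideanSpace.norm_eq, en]
  congr 1
  refine Finset.sum_congr rfl fun i _ => ?_
  rw [Complex.sq_norm]; rfl

lemma en_triangle (u w : Fin n → ℂ) : en (u - w) ≤ en u + en w := by
  rw [en_eq_norm, en_eq_norm, en_eq_norm]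
  exact norm_sub_le ((WithLp.equiv 2 (Fin n → ℂ)).symm u) ((WithLp.equiv 2 (Fin n → ℂ)).symm w)

/-- Key inequality: `(A-B)² ≤ (tr A + tr B)(A + B)` at the level of quadratic forms. -/
lemma key_ineq {A B : Matrix (Fin n) (Fin n) ℂ} (hA : A.PosSemidef) (hB : B.PosSemidef)
    (v : Fin n → ℂ) :
    (star v ⬝ᵥ ((A - B) * (A - B)) *ᵥ v).re ≤
      (A.trace.re + B.trace.re) * (star v ⬝ᵥ (A + B) *ᵥ v).re := by
  set ta := A.trace.re
  set tb := B.trace.re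
  set qa := (star v ⬝ᵥ A *ᵥ v).re with hqa_def
  set qb := (star v ⬝ᵥ B *ᵥ v).re with hqb_def
  have hta : 0 ≤ ta := trace_re_nonneg hA
  have htb : 0 ≤ tb := trace_re_nonneg hB
  have hqa : 0 ≤ qa := by simpa using hA.re_dotProduct_nonneg v
  have hqb : 0 ≤ qb := by simpa using hB.re_dotProduct_nonneg v
  have hD : (A - B).IsHermitian := hA.isHermitian.sub hB.isHermitian
  have hL : (star v ⬝ᵥ ((A - B) * (A - B)) *ᵥ v).re = en ((A *ᵥ v) - (B *ᵥ v)) ^ 2 := by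
    rw [herm_sq_q hD, en_sq, sub_mulVec]
  have hR : (star v ⬝ᵥ (A + B) *ᵥ v).re = qa + qb := by
    simp [add_mulVec, dotProduct_add, hqa_def, hqb_def]
  have ha2 : en (A *ᵥ v) ^ 2 ≤ ta * qa := by
    rw [en_sq, ← herm_sq_q hA.isHermitian]; exact q_sq_le hA v
  have hb2 : en (B *ᵥ v) ^ 2 ≤ tb * qb := by
    rw [en_sq, ← herm_sq_q hB.isHermitian]; exact q_sq_le hB v
  have htri := en_triangle (A *ᵥ v) (B *ᵥ v)
  set x := en ((A *ᵥ v) - (B *ᵥ v))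
  set a := en (A *ᵥ v)
  set b := en (B *ᵥ v)
  have hx0 : 0 ≤ x := en_nonneg _
  have ha0 : 0 ≤ a := en_nonneg _
  have hb0 : 0 ≤ b := en_nonneg _
  rw [hL, hR]
  have habsq : a ^ 2 * b ^ 2 ≤ (ta * qa) * (tb * qb) :=
    mul_le_mul ha2 hb2 (sq_nonneg _) (mul_nonneg hta hqa)
  have hs : 0 ≤ ta * qb + tb * qa :=
    add_nonneg (mul_nonneg hta hqb) (mul_nonneg htb hqa)
  have hsq : (2 * (a * b)) ^ 2 ≤ (ta * qb + tb * qa) ^ 2 := by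
    nlinarith [habsq, sq_nonneg (ta * qb - tb * qa)]
  have h2ab : 2 * (a * b) ≤ ta * qb + tb * qa := by
    have h := Real.sqrt_le_sqrt hsq
    rwa [Real.sqrt_sq (by positivity), Real.sqrt_sq hs] at h
  have hx2 : x ^ 2 ≤ (a + b) ^ 2 := pow_le_pow_left₀ hx0 htri 2
  nlinarith [hx2, ha2, hb2, h2ab]

lemma q_two_smul_re (r s : ℝ) (M N : Matrix (Fin n) (Fin n) ℂ) (v : Fin n → ℂ) :
    (star v ⬝ᵥ ((r : ℂ) • M - (s : ℂ) • N) *ᵥ v).re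
      = r * (star v ⬝ᵥ M *ᵥ v).re - s * (star v ⬝ᵥ N *ᵥ v).re := by
  simp [sub_mulVec, smul_mulVec, dotProduct_sub, dotProduct_smul, Complex.sub_re,
    smul_eq_mul, Complex.re_ofReal_mul]

lemma smul_herm (r : ℝ) {M : Matrix (Fin n) (Fin n) ℂ} (hM : M.IsHermitian) :
    ((r : ℂ) • M).IsHermitian := by
  unfold Matrix.IsHermitian
  rw [conjTranspose_smul, hM.eq, Complex.star_def, Complex.conj_ofReal]

lemma trace_sq_pos {D : Matrix (Fin n) (Fin n) ℂ} (hD : D.IsHermitian) (h : D ≠ 0) :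
    0 < (D * D).trace.re := by
  rw [show D * D = Dᴴ * D by rw [hD.eq], trace_re_rep]
  obtain ⟨i, j, hij⟩ : ∃ i j, D j i ≠ 0 := by
    by_contra hc
    push_neg at hc
    exact h (by ext a b; exact hc b a)
  have hpos : 0 < Complex.normSq (D j i) := by
    simpa [Complex.normSq_pos] using hij
  refine Finset.sum_pos' (fun a _ => Finset.sum_nonneg fun b _ => Complex.normSq_nonneg _)
    ⟨i, Finset.mem_univ i, ?_⟩
  exact Finset.sum_pos' (fun b _ => Complex.normSq_nonneg _) ⟨j, Finset.mem_univ j, hpos⟩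

end QSDAux

open QSDAux Matrix

/-- Uniqueness of the Lagrange operator as dual minimizer: if `σ₁` and `σ₂` are both
Hermitian feasible matrices for the discrimination problem `(ρ x)` and both attain the
minimal trace among all feasible Hermitian matrices, then `σ₁ = σ₂`. -/
theorem qsd_dual_minimizer_unique {n : ℕ} {X : Type*} [Fintype X] [Nonempty X]
    (ρ : X → Matrix (Fin n) (Fin n) ℂ)
    (hρ : ∀ x, (ρ x).PosSemidef)
    (hρtr : (∑ x, (ρ x).trace) = 1)
    (σ₁ σ₂ : Matrix (Fin n) (Fin n) ℂ)
    (hσ₁ : σ₁.IsHermitian) (hσ₂ : σ₂.IsHermitian)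
    (hfeas₁ : ∀ x, (σ₁ - ρ x).PosSemidef)
    (hfeas₂ : ∀ x, (σ₂ - ρ x).PosSemidef)
    (hmin₁ : ∀ σ' : Matrix (Fin n) (Fin n) ℂ, σ'.IsHermitian →
      (∀ x, (σ' - ρ x).PosSemidef) → (σ₁.trace).re ≤ (σ'.trace).re)
    (hmin₂ : ∀ σ' : Matrix (Fin n) (Fin n) ℂ, σ'.IsHermitian →
      (∀ x, (σ' - ρ x).PosSemidef) → (σ₂.trace).re ≤ (σ'.trace).re) :
    σ₁ = σ₂ := by
  by_contra hne
  -- traces are equal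
  have ht12 : σ₁.trace.re = σ₂.trace.re :=
    le_antisymm (hmin₁ σ₂ hσ₂ hfeas₂) (hmin₂ σ₁ hσ₁ hfeas₁)
  set D := σ₁ - σ₂ with hDdef
  have hD : D.IsHermitian := hσ₁.sub hσ₂
  have hDne : D ≠ 0 := sub_ne_zero_of_ne hne
  have htD : 0 < (D * D).trace.re := trace_sq_pos hD hDne
  -- the uniform constant
  set c : ℝ := ∑ x, ((σ₁ - ρ x).trace.re + (σ₂ - ρ x).trace.re + 1) with hcdef
  have hterm_nonneg : ∀ x : X, (0:ℝ) ≤ (σ₁ - ρ x).trace.re + (σ₂ - ρ x).trace.re + 1 := by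
    intro x
    have := trace_re_nonneg (hfeas₁ x)
    have := trace_re_nonneg (hfeas₂ x)
    linarith
  have hc_ge : ∀ x : X, (σ₁ - ρ x).trace.re + (σ₂ - ρ x).trace.re + 1 ≤ c := fun x =>
    Finset.single_le_sum (fun i _ => hterm_nonneg i) (Finset.mem_univ x)
  have hc_pos : 0 < c := by
    obtain ⟨x⟩ := ‹Nonempty X›
    have h1 := hc_ge x
    have h2 := trace_re_nonneg (hfeas₁ x)
    have h3 := trace_re_nonneg (hfeas₂ x)
    linarith
  set r : ℝ := 1 / (2 * c) with hrdef
  have hr_pos : 0 < r := by positivity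
  set σ' : Matrix (Fin n) (Fin n) ℂ :=
    ((1/2 : ℝ) : ℂ) • (σ₁ + σ₂) - ((r : ℝ) : ℂ) • (D * D) with hσ'def
  have hσ'herm : σ'.IsHermitian := by
    refine (smul_herm (1/2) (hσ₁.add hσ₂)).sub (smul_herm r ?_)
    rw [show D * D = Dᴴ * D by rw [hD.eq]]
    exact (Matrix.posSemidef_conjTranspose_mul_self D).isHermitian
  -- feasibility of σ'
  have hfeas' : ∀ x, (σ' - ρ x).PosSemidef := by
    intro x
    have hid : σ' - ρ x
        = ((1/2 : ℝ) : ℂ) • ((σ₁ - ρ x) + (σ₂ - ρ x)) - ((r : ℝ) : ℂ) • (D * D) := by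
      rw [hσ'def, hDdef]
      push_cast
      module
    refine posSemidef_of_herm_re ?_ ?_
    · rw [hid]
      refine (smul_herm (1/2) (((hfeas₁ x).isHermitian).add ((hfeas₂ x).isHermitian))).sub
        (smul_herm r ?_)
      rw [show D * D = Dᴴ * D by rw [hD.eq]]
      exact (Matrix.posSemidef_conjTranspose_mul_self D).isHermitian
    · intro v
      rw [hid, q_two_smul_re]
      set qab := (star v ⬝ᵥ ((σ₁ - ρ x) + (σ₂ - ρ x)) *ᵥ v).re with hqab_def
      set qd := (star v ⬝ᵥ (D * D) *ᵥ v).re with hqd_def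
      have hqab_nonneg : 0 ≤ qab := by
        simpa [hqab_def] using ((hfeas₁ x).add (hfeas₂ x)).re_dotProduct_nonneg v
      have hK : qd ≤ ((σ₁ - ρ x).trace.re + (σ₂ - ρ x).trace.re) * qab := by
        have := key_ineq (hfeas₁ x) (hfeas₂ x) v
        simpa [hDdef, hqd_def, hqab_def, show (σ₁ - ρ x) - (σ₂ - ρ x) = σ₁ - σ₂ by abel]
          using this
      have hcx : (σ₁ - ρ x).trace.re + (σ₂ - ρ x).trace.re ≤ c := by
        have := hc_ge x; linarith
      have h1 : qd ≤ c * qab :=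
        hK.trans (mul_le_mul_of_nonneg_right hcx hqab_nonneg)
      have h2 : r * qd ≤ r * (c * qab) := mul_le_mul_of_nonneg_left h1 (le_of_lt hr_pos)
      have h3 : r * (c * qab) = (1/2 : ℝ) * qab := by
        rw [hrdef]; field_simp
      linarith
  -- trace of σ'
  have htr' : σ'.trace.re = (1/2 : ℝ) * (σ₁.trace.re + σ₂.trace.re) - r * (D * D).trace.re := by
    rw [hσ'def, trace_sub, trace_smul, trace_smul, trace_add, Complex.sub_re]
    simp [smul_eq_mul, Complex.re_ofReal_mul, Complex.add_re]
  have hlb := hmin₁ σ' hσ'herm hfeas'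
  rw [htr', ← ht12] at hlb
  nlinarith [mul_pos hr_pos htD]
end

section
/- (All optimal strategies define the same Lagrange operator.) Let (E_x)_{x∈X} and (F_x)_{x∈X} be two POVMs both attaining the maximal guessing probability P_guess for the discrimination problem (ρ_x)_{x∈X}. Then ∑_{x∈X} E_x ρ_x = ∑_{x∈X} F_x ρ_x; moreover this common matrix σ = ∑_x E_x ρ_x is Hermitian, σ − ρ_x is positive semidefinite for every x ∈ X, and Re Tr(σ) = P_guess. -/
set_option linter.unusedSectionVars false
set_option maxHeartbeats 1000000

open scoped ComplexOrder

section QSDHelpers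
open Matrix
variable {m : Type*} [Fintype m] [DecidableEq m]


lemma qsd_tr_sq_nonneg (A : Matrix m m ℂ) : 0 ≤ (Aᴴ * A).trace := by
  rw [Matrix.trace]
  refine Finset.sum_nonneg fun i _ => ?_
  rw [Matrix.diag_apply, Matrix.mul_apply]
  exact Finset.sum_nonneg fun j _ => by
    simpa [Matrix.conjTranspose_apply] using star_mul_self_nonneg (A j i)

lemma qsd_tr_sq_zero {A : Matrix m m ℂ} (h : (Aᴴ * A).trace = 0) : A = 0 := by
  rw [Matrix.trace] at h
  have h1 := (Finset.sum_eq_zero_iff_of_nonneg (fun i _ => by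
    rw [Matrix.diag_apply, Matrix.mul_apply]
    exact Finset.sum_nonneg fun j _ => by
      simpa [Matrix.conjTranspose_apply] using star_mul_self_nonneg (A j i))).mp h
  ext j i
  have h2 := h1 i (Finset.mem_univ i)
  rw [Matrix.diag_apply, Matrix.mul_apply] at h2
  have h3 := (Finset.sum_eq_zero_iff_of_nonneg (fun j _ => by
    simpa [Matrix.conjTranspose_apply] using star_mul_self_nonneg (A j i))).mp h2
  have := h3 j (Finset.mem_univ j)
  rw [Matrix.conjTranspose_apply] at this
  simpa using (CStarRing.star_mul_self_eq_zero_iff (A j i)).mp this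

lemma qsd_psd_eq_ct_mul_self {A : Matrix m m ℂ} (hA : A.PosSemidef) :
    ∃ B : Matrix m m ℂ, A = Bᴴ * B := by
  open scoped MatrixOrder in
  exact ⟨CFC.sqrt A, by
    rw [show (CFC.sqrt A)ᴴ = CFC.sqrt A from (CFC.sqrt_nonneg A).posSemidef.1.eq,
      CFC.sqrt_mul_sqrt_self A hA.nonneg]⟩

lemma qsd_psd_trace_nonneg {A B : Matrix m m ℂ} (hA : A.PosSemidef) (hB : B.PosSemidef) :
    0 ≤ (A * B).trace := by
  obtain ⟨C, rfl⟩ := qsd_psd_eq_ct_mul_self hA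
  obtain ⟨D, rfl⟩ := qsd_psd_eq_ct_mul_self hB
  have h1 : Cᴴ * C * (Dᴴ * D) = (Cᴴ * C * Dᴴ) * D := by simp [Matrix.mul_assoc]
  have h2 : D * (Cᴴ * C * Dᴴ) = (C * Dᴴ)ᴴ * (C * Dᴴ) := by
    rw [Matrix.conjTranspose_mul, Matrix.conjTranspose_conjTranspose]
    simp [Matrix.mul_assoc]
  rw [h1, Matrix.trace_mul_comm, h2]
  exact qsd_tr_sq_nonneg _

lemma qsd_psd_trace_zero {A B : Matrix m m ℂ} (hA : A.PosSemidef) (hB : B.PosSemidef)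
    (h : (A * B).trace = 0) : A * B = 0 := by
  obtain ⟨C, rfl⟩ := qsd_psd_eq_ct_mul_self hA
  obtain ⟨D, rfl⟩ := qsd_psd_eq_ct_mul_self hB
  have h1 : Cᴴ * C * (Dᴴ * D) = (Cᴴ * C * Dᴴ) * D := by simp [Matrix.mul_assoc]
  have h2 : D * (Cᴴ * C * Dᴴ) = (C * Dᴴ)ᴴ * (C * Dᴴ) := by
    rw [Matrix.conjTranspose_mul, Matrix.conjTranspose_conjTranspose]
    simp [Matrix.mul_assoc]
  rw [h1, Matrix.trace_mul_comm, h2] at h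
  have h3 : C * Dᴴ = 0 := qsd_tr_sq_zero h
  have : Cᴴ * C * (Dᴴ * D) = Cᴴ * (C * Dᴴ) * D := by simp [Matrix.mul_assoc]
  rw [this, h3]
  simp

lemma qsd_psd_sum {ι : Type*} (s : Finset ι) (f : ι → Matrix m m ℂ)
    (h : ∀ i ∈ s, (f i).PosSemidef) : (∑ i ∈ s, f i).PosSemidef :=
  Finset.sum_induction f _ (fun _ _ ha hb => ha.add hb) Matrix.PosSemidef.zero h


lemma qsd_P_herm (ψ : m → ℂ) : (vecMulVec ψ (star ψ)).IsHermitian := by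
  ext i j
  simp [Matrix.conjTranspose_apply, Matrix.vecMulVec_apply, mul_comm]

lemma qsd_P_psd (ψ : m → ℂ) : (vecMulVec ψ (star ψ)).PosSemidef := by
  refine .of_dotProduct_mulVec_nonneg (qsd_P_herm ψ) fun x => ?_
  have h1 : star (star ψ ⬝ᵥ x) = star x ⬝ᵥ ψ := by
    simp [dotProduct, Pi.star_apply, mul_comm]
  have key : star x ⬝ᵥ (vecMulVec ψ (star ψ) *ᵥ x) = star (star ψ ⬝ᵥ x) * (star ψ ⬝ᵥ x) := by
    rw [h1]
    simp only [Matrix.mulVec, Matrix.vecMulVec_apply, dotProduct, Finset.sum_mul,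
      Finset.mul_sum, Pi.star_apply]
    rw [Finset.sum_comm]
    exact Finset.sum_congr rfl fun i _ => Finset.sum_congr rfl fun j _ => by ring
  rw [key]
  exact star_mul_self_nonneg _

lemma qsd_P_sq (ψ : m → ℂ) :
    vecMulVec ψ (star ψ) * vecMulVec ψ (star ψ) = (star ψ ⬝ᵥ ψ) • vecMulVec ψ (star ψ) := by
  ext i j
  simp only [Matrix.mul_apply, Matrix.vecMulVec_apply, Matrix.smul_apply, dotProduct,
    Finset.sum_mul, Pi.star_apply, smul_eq_mul]
  exact Finset.sum_congr rfl fun k _ => by ring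

lemma qsd_trace_P_mul (ψ : m → ℂ) (M : Matrix m m ℂ) :
    (vecMulVec ψ (star ψ) * M).trace = star ψ ⬝ᵥ (M *ᵥ ψ) := by
  simp only [Matrix.trace, Matrix.diag_apply, Matrix.mul_apply, Matrix.vecMulVec_apply,
    dotProduct, Matrix.mulVec, Finset.mul_sum, Pi.star_apply]
  rw [Finset.sum_comm]
  exact Finset.sum_congr rfl fun i _ => Finset.sum_congr rfl fun j _ => by ring

lemma qsd_psd_smul {A : Matrix m m ℂ} (hA : A.PosSemidef) {r : ℝ} (hr : 0 ≤ r) :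
    ((r : ℂ) • A).PosSemidef := by
  refine .of_dotProduct_mulVec_nonneg ?_ ?_
  · have : ((r : ℂ) • A)ᴴ = star (r : ℂ) • Aᴴ := Matrix.conjTranspose_smul _ _
    rw [Matrix.IsHermitian, this, hA.1.eq, Complex.star_def, Complex.conj_ofReal]
  · intro x
    rw [Matrix.smul_mulVec, dotProduct_smul, smul_eq_mul]
    exact mul_nonneg (Complex.zero_le_real.mpr hr) (hA.dotProduct_mulVec_nonneg x)

lemma qsd_dot_conjT (M : Matrix m m ℂ) (ψ : m → ℂ) :
    star ψ ⬝ᵥ (Mᴴ *ᵥ ψ) = star (star ψ ⬝ᵥ (M *ᵥ ψ)) := by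
  simp only [dotProduct, Matrix.mulVec, Matrix.conjTranspose_apply, Pi.star_apply,
    star_sum, star_mul', star_star, Finset.mul_sum]
  rw [Finset.sum_comm]
  exact Finset.sum_congr rfl fun i _ => Finset.sum_congr rfl fun j _ => by ring

lemma qsd_small_t {a b t₀ : ℝ} (ht₀ : 0 < t₀)
    (h : ∀ t : ℝ, 0 < t → t ≤ t₀ → 2 * t * a + t ^ 2 * b ≤ 0) : a ≤ 0 := by
  by_contra ha
  push_neg at ha
  set t : ℝ := min t₀ (a / (|b| + 1)) with ht_def
  have hb1 : 0 < |b| + 1 := by positivity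
  have htpos : 0 < t := lt_min ht₀ (by positivity)
  have ht1 : t ≤ a / (|b| + 1) := min_le_right _ _
  have ht2 : t * (|b| + 1) ≤ a := by
    rw [← le_div_iff₀ hb1]; exact ht1
  have hkey := h t htpos (min_le_left _ _)
  nlinarith [neg_abs_le b, abs_nonneg b, sq_nonneg t, mul_pos htpos htpos]
end QSDHelpers

open Matrix in
/-- All optimal strategies define the same Lagrange operator: if two POVMs `E` and `F`
both attain the maximal guessing probability `P_guess`, then `∑ x, E x * ρ x = ∑ x, F x * ρ x`;
moreover this common matrix `σ` is Hermitian, `σ - ρ x` is positive semidefinite for all `x`,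
and `Re Tr σ = P_guess`. -/
theorem qsd_lagrange_operator_unique {n : ℕ} {X : Type*} [Fintype X]
    (ρ : X → Matrix (Fin n) (Fin n) ℂ)
    (hρ : ∀ x, (ρ x).PosSemidef)
    (hρtr : (∑ x, (ρ x).trace) = 1)
    (E F : X → Matrix (Fin n) (Fin n) ℂ)
    (hE : ∀ x, (E x).PosSemidef) (hEsum : (∑ x, E x) = 1)
    (hF : ∀ x, (F x).PosSemidef) (hFsum : (∑ x, F x) = 1)
    (hEopt : (∑ x, ((E x * ρ x).trace).re) =
      sSup {p : ℝ | ∃ G : X → Matrix (Fin n) (Fin n) ℂ,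
        (∀ x, (G x).PosSemidef) ∧ (∑ x, G x) = 1 ∧
        p = ∑ x, ((G x * ρ x).trace).re})
    (hFopt : (∑ x, ((F x * ρ x).trace).re) =
      sSup {p : ℝ | ∃ G : X → Matrix (Fin n) (Fin n) ℂ,
        (∀ x, (G x).PosSemidef) ∧ (∑ x, G x) = 1 ∧
        p = ∑ x, ((G x * ρ x).trace).re}) :
    (∑ x, E x * ρ x) = (∑ x, F x * ρ x) ∧
    (∑ x, E x * ρ x).IsHermitian ∧
    (∀ x, ((∑ y, E y * ρ y) - ρ x).PosSemidef) ∧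
    ((∑ x, E x * ρ x).trace).re =
      sSup {p : ℝ | ∃ G : X → Matrix (Fin n) (Fin n) ℂ,
        (∀ x, (G x).PosSemidef) ∧ (∑ x, G x) = 1 ∧
        p = ∑ x, ((G x * ρ x).trace).re} := by
  classical
  set S : Set ℝ := {p : ℝ | ∃ G : X → Matrix (Fin n) (Fin n) ℂ,
        (∀ x, (G x).PosSemidef) ∧ (∑ x, G x) = 1 ∧
        p = ∑ x, ((G x * ρ x).trace).re} with hSdef
  -- `1 - G x` is PSD for any POVM `G`
  have hpsd_sub_one : ∀ (G : X → Matrix (Fin n) (Fin n) ℂ), (∀ x, (G x).PosSemidef) →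
      (∑ x, G x) = 1 → ∀ x, ((1 : Matrix (Fin n) (Fin n) ℂ) - G x).PosSemidef := by
    intro G hG hGs x
    have h0 := Finset.add_sum_erase Finset.univ G (Finset.mem_univ x)
    rw [hGs] at h0
    have h1 : (1 : Matrix (Fin n) (Fin n) ℂ) - G x = ∑ y ∈ Finset.univ.erase x, G y :=
      (eq_sub_of_add_eq' h0).symm
    rw [h1]
    exact qsd_psd_sum _ _ (fun y _ => hG y)
  have hbdd : BddAbove S := by
    refine ⟨(∑ x, (ρ x).trace).re, fun p hp => ?_⟩
    obtain ⟨G, hG, hGs, rfl⟩ := hp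
    have hre : (∑ x, (ρ x).trace).re = ∑ x, ((ρ x).trace).re := by
      simp [Complex.re_sum]
    rw [hre]
    refine Finset.sum_le_sum fun x _ => ?_
    have h0 : 0 ≤ (((1 : Matrix (Fin n) (Fin n) ℂ) - G x) * ρ x).trace :=
      qsd_psd_trace_nonneg (hpsd_sub_one G hG hGs x) (hρ x)
    have h1 : (((1 : Matrix (Fin n) (Fin n) ℂ) - G x) * ρ x).trace
        = (ρ x).trace - (G x * ρ x).trace := by
      rw [Matrix.sub_mul, Matrix.trace_sub, Matrix.one_mul]
    have h2 := (Complex.nonneg_iff.mp h0).1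
    rw [h1, Complex.sub_re] at h2
    linarith
  have hle : ∀ (G : X → Matrix (Fin n) (Fin n) ℂ), (∀ x, (G x).PosSemidef) →
      (∑ x, G x) = 1 →
      (∑ x, ((G x * ρ x).trace).re) ≤ ∑ x, ((E x * ρ x).trace).re := by
    intro G hG hGs
    rw [hEopt]
    exact le_csSup hbdd ⟨G, hG, hGs, rfl⟩
  -- Step 1 : quadratic-form inequality for the optimal POVM E
  have step1 : ∀ (j : X) (ψ : Fin n → ℂ),
      (star ψ ⬝ᵥ (ρ j *ᵥ ψ)).re ≤ (star ψ ⬝ᵥ ((∑ x, E x * ρ x) *ᵥ ψ)).re := by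
    intro j ψ
    set P : Matrix (Fin n) (Fin n) ℂ := vecMulVec ψ (star ψ) with hPdef
    have hPH : P.IsHermitian := qsd_P_herm ψ
    have hPpsd : P.PosSemidef := qsd_P_psd ψ
    have hψ0 := dotProduct_star_self_nonneg ψ
    set r : ℝ := (star ψ ⬝ᵥ ψ).re with hrdef
    have hr0 : 0 ≤ r := (Complex.nonneg_iff.mp hψ0).1
    have hsr : star ψ ⬝ᵥ ψ = (r : ℂ) := by
      obtain ⟨h1, h2⟩ := Complex.nonneg_iff.mp hψ0
      exact Complex.ext (by simp [hrdef]) (by simp [← h2])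
    have hPP : P * P = (r : ℂ) • P := by rw [← hsr]; exact qsd_P_sq ψ
    suffices h : ((P * ρ j).trace).re - ((P * (∑ x, E x * ρ x)).trace).re ≤ 0 by
      rw [qsd_trace_P_mul ψ (ρ j), qsd_trace_P_mul ψ (∑ x, E x * ρ x)] at h
      linarith
    refine qsd_small_t (t₀ := 1 / (r + 1)) (by positivity)
      (b := (∑ x, ((P * (E x * (P * ρ x))).trace).re) - r * ((P * ρ j).trace).re) ?_
    intro t ht htle
    have htr1 : t * (r + 1) ≤ 1 := by
      rw [← le_div_iff₀ (by positivity : (0:ℝ) < r + 1)]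
      exact htle
    have hc0 : (0:ℝ) ≤ 2 * t - t ^ 2 * r := by nlinarith
    set B : Matrix (Fin n) (Fin n) ℂ := 1 - (t : ℂ) • P with hBdef
    have hBH : Bᴴ = B := by
      rw [hBdef, Matrix.conjTranspose_sub, Matrix.conjTranspose_smul, Matrix.conjTranspose_one,
        hPH.eq, Complex.star_def, Complex.conj_ofReal]
    set c : ℝ := 2 * t - t ^ 2 * r with hcdef
    set G : X → Matrix (Fin n) (Fin n) ℂ :=
      fun x => B * E x * Bᴴ + (if x = j then (c : ℂ) • P else 0) with hGdef
    have hGpsd : ∀ x, (G x).PosSemidef := by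
      intro x
      refine ((hE x).mul_mul_conjTranspose_same B).add ?_
      by_cases hx : x = j
      · simp only [hx, if_pos rfl]
        exact qsd_psd_smul hPpsd hc0
      · simp only [if_neg hx]
        exact Matrix.PosSemidef.zero
    have hBB : B * B = 1 - (c : ℂ) • P := by
      rw [hBdef]
      have e1 : ((1 : Matrix (Fin n) (Fin n) ℂ) - (t:ℂ) • P) * (1 - (t:ℂ) • P)
          = 1 - (t:ℂ) • P - (t:ℂ) • P + ((t:ℂ) * (t:ℂ)) • (P * P) := by
        simp only [Matrix.sub_mul, Matrix.mul_sub, Matrix.one_mul, Matrix.mul_one,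
          smul_mul_assoc, mul_smul_comm, smul_smul]
        module
      rw [e1, hPP, smul_smul]
      have hcc : ((c : ℝ) : ℂ) = (t:ℂ) + (t:ℂ) - (t:ℂ) * (t:ℂ) * (r:ℂ) := by
        rw [hcdef]; push_cast; ring
      rw [hcc]
      module
    have hGsum : ∑ x, G x = 1 := by
      rw [hGdef, Finset.sum_add_distrib]
      have h1 : ∑ x, B * E x * Bᴴ = B * B := by
        rw [← Finset.sum_mul, ← Finset.mul_sum, hEsum, Matrix.mul_one, hBH]
      have h2 : (∑ x, if x = j then (c : ℂ) • P else 0) = (c : ℂ) • P := by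
        simp
      rw [h1, h2, hBB, sub_add_cancel]
    have hswap : ∀ x, ((E x * (P * ρ x)).trace).re = ((P * (E x * ρ x)).trace).re := by
      intro x
      have h1 : (E x * (P * ρ x)).trace = (P * (ρ x * E x)).trace := by
        rw [← Matrix.mul_assoc, Matrix.trace_mul_cycle, Matrix.trace_mul_cycle,
          Matrix.mul_assoc]
      have h2 : ((P * (ρ x * E x))ᴴ).trace = ((E x * ρ x) * P).trace := by
        rw [Matrix.conjTranspose_mul, Matrix.conjTranspose_mul, hPH.eq, (hρ x).1.eq,
          (hE x).1.eq, Matrix.mul_assoc]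
      calc ((E x * (P * ρ x)).trace).re
          = ((P * (ρ x * E x)).trace).re := by rw [h1]
        _ = (((P * (ρ x * E x))ᴴ).trace).re := by
            rw [Matrix.trace_conjTranspose, Complex.star_def, Complex.conj_re]
        _ = (((E x * ρ x) * P).trace).re := by rw [h2]
        _ = ((P * (E x * ρ x)).trace).re := by rw [Matrix.trace_mul_comm]
    have hexp : ∀ x, G x * ρ x
        = E x * ρ x - (t:ℂ) • (P * (E x * ρ x)) - (t:ℂ) • (E x * (P * ρ x))
          + ((t:ℂ) * (t:ℂ)) • (P * (E x * (P * ρ x)))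
          + (if x = j then (c:ℂ) • (P * ρ x) else 0) := by
      intro x
      simp only [hGdef]
      rw [hBH, hBdef, Matrix.add_mul, ite_mul, Matrix.zero_mul, smul_mul_assoc]
      congr 1
      simp only [Matrix.sub_mul, Matrix.mul_sub, Matrix.one_mul, Matrix.mul_one,
        smul_mul_assoc, mul_smul_comm, smul_smul, Matrix.mul_assoc]
      module
    have hre_x : ∀ x, ((G x * ρ x).trace).re
        = ((E x * ρ x).trace).re - 2 * t * ((P * (E x * ρ x)).trace).re
          + t^2 * ((P * (E x * (P * ρ x))).trace).re
          + (if x = j then c * ((P * ρ x).trace).re else 0) := by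
      intro x
      rw [hexp x]
      have hite : (if x = j then (c:ℂ) • (P * ρ x) else 0).trace
          = if x = j then (c:ℂ) * (P * ρ x).trace else 0 := by
        split <;> simp [Matrix.trace_smul, smul_eq_mul]
      rw [Matrix.trace_add, Matrix.trace_add, Matrix.trace_sub, Matrix.trace_sub,
        Matrix.trace_smul, Matrix.trace_smul, Matrix.trace_smul, hite]
      have htt : ((t:ℂ) * (t:ℂ)) = (((t*t : ℝ)) : ℂ) := by push_cast; ring
      rw [htt]
      simp only [Complex.add_re, Complex.sub_re, smul_eq_mul, Complex.re_ofReal_mul]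
      have hiter : (if x = j then (c:ℂ) * (P * ρ x).trace else 0).re
          = if x = j then c * ((P * ρ x).trace).re else 0 := by
        split <;> simp [Complex.re_ofReal_mul]
      rw [hiter, hswap x]
      ring
    have hGval : (∑ x, ((G x * ρ x).trace).re)
        = (∑ x, ((E x * ρ x).trace).re) - 2*t*((P * (∑ x, E x * ρ x)).trace).re
          + t^2*(∑ x, ((P * (E x * (P * ρ x))).trace).re) + c * ((P * ρ j).trace).re := by
      rw [Finset.sum_congr rfl fun x _ => hre_x x]
      rw [Finset.sum_add_distrib, Finset.sum_add_distrib, Finset.sum_sub_distrib]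
      rw [Finset.sum_ite_eq' Finset.univ j (fun x => c * ((P * ρ x).trace).re)]
      simp only [Finset.mem_univ, if_true]
      rw [← Finset.mul_sum, ← Finset.mul_sum]
      have h4 : P * (∑ x, E x * ρ x) = ∑ x, P * (E x * ρ x) := Finset.mul_sum _ _ _
      rw [h4, Matrix.trace_sum, Complex.re_sum]
    have hfin := hle G hGpsd hGsum
    rw [hGval] at hfin
    have hident : 2 * t * (((P * ρ j).trace).re - ((P * (∑ x, E x * ρ x)).trace).re)
        + t ^ 2 * ((∑ x, ((P * (E x * (P * ρ x))).trace).re) - r * ((P * ρ j).trace).re)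
        = - (2*t*((P * (∑ x, E x * ρ x)).trace).re)
          + t^2*(∑ x, ((P * (E x * (P * ρ x))).trace).re) + c * ((P * ρ j).trace).re := by
      rw [hcdef]; ring
    linarith
  -- the Hermitian Lagrange operator
  set σ : Matrix (Fin n) (Fin n) ℂ :=
      (2⁻¹ : ℂ) • ((∑ x, E x * ρ x) + (∑ x, E x * ρ x)ᴴ) with hσdef
  have hσH : σ.IsHermitian := by
    rw [Matrix.IsHermitian, hσdef, Matrix.conjTranspose_smul, Matrix.conjTranspose_add,
      Matrix.conjTranspose_conjTranspose]
    rw [show star (2⁻¹ : ℂ) = (2⁻¹ : ℂ) by norm_num]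
    rw [add_comm]
  have hσquad : ∀ ψ : Fin n → ℂ, star ψ ⬝ᵥ (σ *ᵥ ψ)
      = (((star ψ ⬝ᵥ ((∑ x, E x * ρ x) *ᵥ ψ)).re : ℝ) : ℂ) := by
    intro ψ
    rw [hσdef, Matrix.smul_mulVec, dotProduct_smul, Matrix.add_mulVec, dotProduct_add,
      qsd_dot_conjT]
    rw [Complex.star_def, Complex.add_conj]
    rw [smul_eq_mul]
    push_cast
    ring
  have hσpsd : ∀ x, (σ - ρ x).PosSemidef := by
    intro x
    refine .of_dotProduct_mulVec_nonneg (hσH.sub (hρ x).1) fun ψ => ?_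
    rw [Matrix.sub_mulVec, dotProduct_sub, hσquad ψ]
    have h0 : 0 ≤ star ψ ⬝ᵥ (ρ x *ᵥ ψ) := (hρ x).dotProduct_mulVec_nonneg ψ
    have h1 : star ψ ⬝ᵥ (ρ x *ᵥ ψ) = (((star ψ ⬝ᵥ (ρ x *ᵥ ψ)).re : ℝ) : ℂ) := by
      obtain ⟨hre, him⟩ := Complex.nonneg_iff.mp h0
      exact Complex.ext (by simp) (by simp [← him])
    rw [h1, ← Complex.ofReal_sub, Complex.zero_le_real, sub_nonneg]
    exact step1 x ψ
  have hσtr : σ.trace.re = ∑ x, ((E x * ρ x).trace).re := by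
    have h1 : σ.trace = ((((∑ x, E x * ρ x).trace.re : ℝ)) : ℂ) := by
      rw [hσdef, Matrix.trace_smul, Matrix.trace_add, Matrix.trace_conjTranspose,
        Complex.star_def, Complex.add_conj, smul_eq_mul]
      push_cast
      ring
    rw [h1, Complex.ofReal_re, Matrix.trace_sum, Complex.re_sum]
  -- complementary slackness : every optimal POVM G satisfies ∑ G x ρ x = σ
  have slack : ∀ (G : X → Matrix (Fin n) (Fin n) ℂ), (∀ x, (G x).PosSemidef) →
      (∑ x, G x) = 1 →
      (∑ x, ((G x * ρ x).trace).re) = (∑ x, ((E x * ρ x).trace).re) →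
      (∑ x, G x * ρ x) = σ := by
    intro G hG hGs hGopt
    have hz : ∀ x, 0 ≤ (G x * (σ - ρ x)).trace :=
      fun x => qsd_psd_trace_nonneg (hG x) (hσpsd x)
    have hsum : ∑ x, G x * (σ - ρ x) = σ - ∑ x, G x * ρ x := by
      simp only [Matrix.mul_sub]
      rw [Finset.sum_sub_distrib, ← Finset.sum_mul, hGs, Matrix.one_mul]
    have hre_sum : ∑ x, ((G x * (σ - ρ x)).trace).re = 0 := by
      rw [← Complex.re_sum, ← Matrix.trace_sum, hsum, Matrix.trace_sub, Complex.sub_re,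
        hσtr, Matrix.trace_sum, Complex.re_sum, hGopt]
      ring
    have hzero : ∀ x, (G x * (σ - ρ x)).trace = 0 := by
      intro x
      have h1 := (Finset.sum_eq_zero_iff_of_nonneg
        (fun x _ => (Complex.nonneg_iff.mp (hz x)).1)).mp hre_sum x (Finset.mem_univ x)
      exact Complex.ext h1 (Complex.nonneg_iff.mp (hz x)).2.symm
    have hmulσ : ∀ x, G x * σ = G x * ρ x := by
      intro x
      have h2 := qsd_psd_trace_zero (hG x) (hσpsd x) (hzero x)
      rw [Matrix.mul_sub, sub_eq_zero] at h2
      exact h2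
    have h3 : (∑ x, G x * ρ x) = (∑ x, G x) * σ := by
      rw [Finset.sum_mul]
      exact Finset.sum_congr rfl fun x _ => (hmulσ x).symm
    rw [h3, hGs, Matrix.one_mul]
  have hEσ : (∑ x, E x * ρ x) = σ := slack E hE hEsum rfl
  have hFσ : (∑ x, F x * ρ x) = σ := slack F hF hFsum (hFopt.trans hEopt.symm)
  refine ⟨hEσ.trans hFσ.symm, hEσ ▸ hσH, fun x => hEσ ▸ hσpsd x, ?_⟩
  rw [hEσ, hσtr, hEopt]
end

section
/- (Optimality criterion, Eq. (3) of the QSD Duality Theorem.) Let σ be a Hermitian matrix such that σ − ρ_x is positive semidefinite for every x ∈ X and Re Tr(σ) = P_guess (the Lagrange operator). Then a POVM (E_x)_{x∈X} is optimal (attains P_guess) if and only if E_x σ = E_x ρ_x for every x ∈ X. -/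
open scoped ComplexOrder
open Matrix

lemma qsd_trace_conjTranspose_mul_self_eq {m k : ℕ} (M : Matrix (Fin m) (Fin k) ℂ) :
    (Mᴴ * M).trace = ((∑ j, ∑ i, Complex.normSq (M i j) : ℝ) : ℂ) := by
  have h : ∀ (i : Fin m) (j : Fin k), (star (M i j)) * M i j = (Complex.normSq (M i j) : ℂ) :=
    fun i j => by rw [Complex.star_def, mul_comm, Complex.mul_conj]
  simp only [Matrix.trace, Matrix.diag, Matrix.mul_apply, Matrix.conjTranspose_apply, h]
  push_cast
  rfl

open scoped MatrixOrder in
lemma qsd_psd_trace_mul {m : ℕ} {A B : Matrix (Fin m) (Fin m) ℂ}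
    (hA : A.PosSemidef) (hB : B.PosSemidef) :
    0 ≤ ((A * B).trace).re ∧ (((A * B).trace).re = 0 → A * B = 0) := by
  set S := CFC.sqrt A with hS
  set T := CFC.sqrt B with hT
  have hM : (A * B).trace = ((T * S)ᴴ * (T * S)).trace := by
    rw [conjTranspose_mul, (CFC.sqrt_nonneg B).posSemidef.isHermitian.eq, (CFC.sqrt_nonneg A).posSemidef.isHermitian.eq]
    calc (A * B).trace = (B * A).trace := Matrix.trace_mul_comm _ _
      _ = (T * (T * (S * S))).trace := by
          rw [show T * (T * (S * S)) = (T * T) * (S * S) by simp only [Matrix.mul_assoc],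
            CFC.sqrt_mul_sqrt_self A hA.nonneg, CFC.sqrt_mul_sqrt_self B hB.nonneg]
      _ = ((T * (S * S)) * T).trace := (Matrix.trace_mul_comm _ _).symm
      _ = ((T * S) * (S * T)).trace := by
          rw [show (T * S) * (S * T) = (T * (S * S)) * T by simp only [Matrix.mul_assoc]]
      _ = (S * T * (T * S)).trace := Matrix.trace_mul_comm _ _
  rw [hM, qsd_trace_conjTranspose_mul_self_eq]
  have hnn : ∀ j ∈ Finset.univ, (0:ℝ) ≤ ∑ i, Complex.normSq ((T * S) i j) :=
    fun j _ => Finset.sum_nonneg fun i _ => Complex.normSq_nonneg _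
  constructor
  · simp only [Complex.ofReal_re]
    exact Finset.sum_nonneg hnn
  · intro h
    simp only [Complex.ofReal_re] at h
    have hTS : T * S = 0 := by
      ext i j
      have h1 := (Finset.sum_eq_zero_iff_of_nonneg hnn).mp h j (Finset.mem_univ j)
      have h2 := (Finset.sum_eq_zero_iff_of_nonneg
        (fun i _ => Complex.normSq_nonneg ((T * S) i j))).mp h1 i (Finset.mem_univ i)
      simpa using Complex.normSq_eq_zero.mp h2
    have hBA : B * A = 0 := by
      calc B * A = T * (T * S) * S := by
            rw [show T * (T * S) * S = (T * T) * (S * S) by simp only [Matrix.mul_assoc],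
              CFC.sqrt_mul_sqrt_self A hA.nonneg, CFC.sqrt_mul_sqrt_self B hB.nonneg]
        _ = 0 := by rw [hTS, Matrix.mul_zero, Matrix.zero_mul]
    calc A * B = (B * A)ᴴ := by
          rw [conjTranspose_mul, hA.isHermitian.eq, hB.isHermitian.eq]
      _ = 0 := by rw [hBA, conjTranspose_zero]

/-- Optimality criterion (Eq. (3) of the QSD duality theorem): if `σ` is the Lagrange
operator (Hermitian, feasible, with `Re Tr σ = P_guess`), then a POVM `E` is optimal
if and only if `E x * σ = E x * ρ x` for every `x`. -/
theorem qsd_optimality_criterion {n : ℕ} {X : Type*} [Fintype X]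
    (ρ : X → Matrix (Fin n) (Fin n) ℂ)
    (hρ : ∀ x, (ρ x).PosSemidef)
    (hρtr : (∑ x, (ρ x).trace) = 1)
    (σ : Matrix (Fin n) (Fin n) ℂ)
    (hσ : σ.IsHermitian)
    (hfeas : ∀ x, (σ - ρ x).PosSemidef)
    (hσtr : (σ.trace).re =
      sSup {p : ℝ | ∃ G : X → Matrix (Fin n) (Fin n) ℂ,
        (∀ x, (G x).PosSemidef) ∧ (∑ x, G x) = 1 ∧
        p = ∑ x, ((G x * ρ x).trace).re})
    (E : X → Matrix (Fin n) (Fin n) ℂ)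
    (hE : ∀ x, (E x).PosSemidef) (hEsum : (∑ x, E x) = 1) :
    ((∑ x, ((E x * ρ x).trace).re) =
      sSup {p : ℝ | ∃ G : X → Matrix (Fin n) (Fin n) ℂ,
        (∀ x, (G x).PosSemidef) ∧ (∑ x, G x) = 1 ∧
        p = ∑ x, ((G x * ρ x).trace).re})
    ↔ (∀ x, E x * σ = E x * ρ x) := by
  -- key identity for any POVM G
  have key : ∀ G : X → Matrix (Fin n) (Fin n) ℂ, (∑ x, G x) = 1 →
      σ.trace.re - (∑ x, ((G x * ρ x).trace).re) = ∑ x, ((G x * (σ - ρ x)).trace).re := by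
    intro G hG
    have h1 : σ.trace = ∑ x, (G x * σ).trace := by
      rw [← Matrix.trace_sum, ← Finset.sum_mul, hG, Matrix.one_mul]
    have h2 : σ.trace.re = ∑ x, ((G x * σ).trace).re := by
      rw [h1, Complex.re_sum]
    rw [h2, ← Finset.sum_sub_distrib]
    refine Finset.sum_congr rfl fun x _ => ?_
    rw [Matrix.mul_sub, Matrix.trace_sub, Complex.sub_re]
  constructor
  · intro hp
    rw [← hσtr] at hp
    have hz : ∑ x, ((E x * (σ - ρ x)).trace).re = 0 := by
      rw [← key E hEsum, hp, sub_self]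
    have hterm : ∀ x ∈ Finset.univ, (0:ℝ) ≤ ((E x * (σ - ρ x)).trace).re :=
      fun x _ => (qsd_psd_trace_mul (hE x) (hfeas x)).1
    intro x
    have hx0 := (Finset.sum_eq_zero_iff_of_nonneg hterm).mp hz x (Finset.mem_univ x)
    have := (qsd_psd_trace_mul (hE x) (hfeas x)).2 hx0
    rw [Matrix.mul_sub, sub_eq_zero] at this
    exact this
  · intro h
    rw [← hσtr]
    calc (∑ x, ((E x * ρ x).trace).re) = ∑ x, ((E x * σ).trace).re := by
          refine Finset.sum_congr rfl fun x _ => ?_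
          rw [h x]
      _ = σ.trace.re := by
          rw [← Complex.re_sum, ← Matrix.trace_sum, ← Finset.sum_mul, hEsum, Matrix.one_mul]
end

section
/- (Sufficient condition for optimality, Eq. (5).) Let (E_x)_{x∈X} be a POVM and set σ = ∑_{x∈X} E_x ρ_x. If the Hermitian matrix (σ + σ*)/2 − ρ_x is positive semidefinite for every x ∈ X (where σ* is the conjugate transpose of σ), then the POVM (E_x) is optimal, i.e. its guessing probability equals P_guess. -/
open scoped ComplexOrder Matrix

lemma psd_trace_nonneg {n : ℕ} {A : Matrix (Fin n) (Fin n) ℂ} (hA : A.PosSemidef) :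
    0 ≤ A.trace := by
  rw [Matrix.trace]
  apply Finset.sum_nonneg
  intro i _
  simpa using hA.diag_nonneg (i := i)

open scoped MatrixOrder in
lemma psd_trace_mul_nonneg {n : ℕ} {A B : Matrix (Fin n) (Fin n) ℂ}
    (hA : A.PosSemidef) (hB : B.PosSemidef) : 0 ≤ (A * B).trace := by
  have h1 : A = CFC.sqrt A * CFC.sqrt A := (CFC.sqrt_mul_sqrt_self A hA.nonneg).symm
  have h2 : (CFC.sqrt A * CFC.sqrt A * B).trace = (CFC.sqrt A * B * CFC.sqrt A).trace := by
    exact (Matrix.trace_mul_cycle (CFC.sqrt A) B (CFC.sqrt A)).symm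
  have h3 : (CFC.sqrt A * B * CFC.sqrt A).PosSemidef := by
    have := hB.mul_mul_conjTranspose_same (CFC.sqrt A)
    rwa [(Matrix.nonneg_iff_posSemidef.mp (CFC.sqrt_nonneg A)).1] at this
  rw [h1, h2]
  exact psd_trace_nonneg h3

/-- Sufficient condition for optimality (Eq. (5)): if `E` is a POVM and
`σ = ∑ x, E x * ρ x` satisfies `(σ + σᴴ)/2 - ρ x ⪰ 0` for all `x`, then `E` is optimal. -/
theorem qsd_sufficient_optimality {n : ℕ} {X : Type*} [Fintype X]
    (ρ : X → Matrix (Fin n) (Fin n) ℂ)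
    (hρ : ∀ x, (ρ x).PosSemidef)
    (hρtr : (∑ x, (ρ x).trace) = 1)
    (E : X → Matrix (Fin n) (Fin n) ℂ)
    (hE : ∀ x, (E x).PosSemidef) (hEsum : (∑ x, E x) = 1)
    (hcond : ∀ x, ((1/2 : ℂ) • ((∑ y, E y * ρ y) + (∑ y, E y * ρ y)ᴴ) - ρ x).PosSemidef) :
    (∑ x, ((E x * ρ x).trace).re) =
      sSup {p : ℝ | ∃ G : X → Matrix (Fin n) (Fin n) ℂ,
        (∀ x, (G x).PosSemidef) ∧ (∑ x, G x) = 1 ∧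
        p = ∑ x, ((G x * ρ x).trace).re} := by
  set σ : Matrix (Fin n) (Fin n) ℂ := ∑ y, E y * ρ y with hσ
  set M : Matrix (Fin n) (Fin n) ℂ := (1/2 : ℂ) • (σ + σᴴ) with hM
  -- trace of M real part equals ∑ Re tr(E x ρ x)
  have htrσ : σ.trace = ∑ x, (E x * ρ x).trace := by
    simp [hσ, Matrix.trace_sum]
  have htrM : M.trace.re = ∑ x, ((E x * ρ x).trace).re := by
    have : M.trace = (1/2 : ℂ) * (σ.trace + (starRingEnd ℂ) σ.trace) := by
      simp [hM, Matrix.trace_smul, Matrix.trace_add, Matrix.trace_conjTranspose]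
      ring
    rw [this]
    rw [Complex.add_conj]
    simp [htrσ, Complex.re_sum]
  -- key upper bound
  have key : ∀ G : X → Matrix (Fin n) (Fin n) ℂ, (∀ x, (G x).PosSemidef) →
      (∑ x, G x) = 1 → (∑ x, ((G x * ρ x).trace).re) ≤ ∑ x, ((E x * ρ x).trace).re := by
    intro G hG hGsum
    have hle : ∀ x, ((G x * ρ x).trace).re ≤ ((G x * M).trace).re := by
      intro x
      have h0 : 0 ≤ (G x * (M - ρ x)).trace := psd_trace_mul_nonneg (hG x) (hcond x)
      have : (G x * (M - ρ x)).trace = (G x * M).trace - (G x * ρ x).trace := by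
        rw [Matrix.mul_sub, Matrix.trace_sub]
      rw [this] at h0
      have := (Complex.le_def.mp h0).1
      simpa using this
    calc (∑ x, ((G x * ρ x).trace).re) ≤ ∑ x, ((G x * M).trace).re :=
          Finset.sum_le_sum (fun x _ => hle x)
      _ = ((∑ x, G x * M).trace).re := by simp [Matrix.trace_sum, Complex.re_sum]
      _ = M.trace.re := by rw [← Finset.sum_mul, hGsum, one_mul]
      _ = ∑ x, ((E x * ρ x).trace).re := htrM
  have hmem : (∑ x, ((E x * ρ x).trace).re) ∈ {p : ℝ | ∃ G : X → Matrix (Fin n) (Fin n) ℂ,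
      (∀ x, (G x).PosSemidef) ∧ (∑ x, G x) = 1 ∧ p = ∑ x, ((G x * ρ x).trace).re} :=
    ⟨E, hE, hEsum, rfl⟩
  have hub : ∀ p ∈ {p : ℝ | ∃ G : X → Matrix (Fin n) (Fin n) ℂ,
      (∀ x, (G x).PosSemidef) ∧ (∑ x, G x) = 1 ∧ p = ∑ x, ((G x * ρ x).trace).re},
      p ≤ ∑ x, ((E x * ρ x).trace).re := by
    rintro p ⟨G, hG, hGsum, rfl⟩
    exact key G hG hGsum
  exact (IsGreatest.csSup_eq ⟨hmem, hub⟩).symm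
end

section
/- (Proposition 1: Lagrange operator as interior ball.) Let (ρ_x)_{x∈X} be a finite family of positive semidefinite 2×2 matrices with ρ_x = M(p_x, r_x), let p = max_{x∈X} p_x, and let σ = M(t, s) be Hermitian. Then σ − ρ_x is positive semidefinite for every x ∈ X if and only if t ≥ p and for every x ∈ X the closed Euclidean balls closedBall(s, t − p) and closedBall(r_x, p − p_x) in ℝ³ have nonempty intersection. -/
open scoped ComplexOrder

/-- The Pauli matrices. -/
noncomputable def pauli1 : Matrix (Fin 2) (Fin 2) ℂ := !![0, 1; 1, 0]
noncomputable def pauli2 : Matrix (Fin 2) (Fin 2) ℂ := !![0, -Complex.I; Complex.I, 0]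
noncomputable def pauli3 : Matrix (Fin 2) (Fin 2) ℂ := !![1, 0; 0, -1]

/-- The Bloch representation `M(p, r) = (1/2)(p·I + r₁σ₁ + r₂σ₂ + r₃σ₃)` for `r ∈ ℝ³`. -/
noncomputable def blochMat (p : ℝ) (r : EuclideanSpace ℝ (Fin 3)) :
    Matrix (Fin 2) (Fin 2) ℂ :=
  (1/2 : ℂ) • ((p : ℂ) • (1 : Matrix (Fin 2) (Fin 2) ℂ)
    + (r 0 : ℂ) • pauli1 + (r 1 : ℂ) • pauli2 + (r 2 : ℂ) • pauli3)

open scoped Matrix in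
lemma blochMat_quadform (q : ℝ) (v : EuclideanSpace ℝ (Fin 3)) (x : Fin 2 → ℂ) :
    (star x) ⬝ᵥ ((blochMat q v) *ᵥ x)
      = (((q * (Complex.normSq (x 0) + Complex.normSq (x 1))
          + (v 2)*(Complex.normSq (x 0) - Complex.normSq (x 1))
          + 2*(v 0)*((starRingEnd ℂ) (x 0) * (x 1)).re
          + 2*(v 1)*((starRingEnd ℂ) (x 0) * (x 1)).im)/2 : ℝ) : ℂ) := by
  simp [blochMat, pauli1, pauli2, pauli3, dotProduct, Matrix.mulVec,
    Fin.sum_univ_two, Matrix.smul_apply, Matrix.add_apply, Matrix.one_apply, Complex.normSq]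
  apply Complex.ext <;> simp <;> ring

lemma blochMat_isHermitian (q : ℝ) (v : EuclideanSpace ℝ (Fin 3)) :
    (blochMat q v).IsHermitian := by
  ext i j
  fin_cases i <;> fin_cases j <;>
    (simp [blochMat, pauli1, pauli2, pauli3, Matrix.conjTranspose_apply,
      Matrix.smul_apply, Matrix.add_apply, Matrix.one_apply]; apply Complex.ext <;> simp <;> ring)

lemma euclidean_norm_sq_eq (v : EuclideanSpace ℝ (Fin 3)) :
    ‖v‖^2 = v 0^2 + v 1^2 + v 2^2 := by
  rw [EuclideanSpace.norm_eq, Real.sq_sqrt (by positivity)]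
  simp [Fin.sum_univ_three, sq_abs]

lemma blochMat_posSemidef_iff (q : ℝ) (v : EuclideanSpace ℝ (Fin 3)) :
    (blochMat q v).PosSemidef ↔ ‖v‖ ≤ q := by
  have hn2 := euclidean_norm_sq_eq v
  have hn0 : (0:ℝ) ≤ ‖v‖ := norm_nonneg v
  rw [Matrix.posSemidef_iff_dotProduct_mulVec]
  constructor
  · rintro ⟨-, h⟩
    have h1 := h ![1, 0]
    have h2 := h ![0, 1]
    have h3 := h ![((‖v‖ - v 2 : ℝ) : ℂ), -(v 0 + Complex.I * v 1)]
    rw [blochMat_quadform, Complex.zero_le_real] at h1 h2 h3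
    simp [Complex.normSq_apply] at h1 h2 h3
    have hv2 : v 2 ≤ ‖v‖ := by nlinarith
    have e : q * ((‖v‖ - v 2) * (‖v‖ - v 2) + (v 0 * v 0 + v 1 * v 1)) +
              v 2 * ((‖v‖ - v 2) * (‖v‖ - v 2) - (v 0 * v 0 + v 1 * v 1)) +
            -(2 * v 0 * ((‖v‖ - v 2) * v 0)) + -(2 * v 1 * ((‖v‖ - v 2) * v 1))
          = 2 * ‖v‖ * (‖v‖ - v 2) * (q - ‖v‖) := by
      linear_combination (-(q - v 2 - 2*(‖v‖ - v 2))) * hn2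
    rw [e] at h3
    by_cases hz : ‖v‖ * (‖v‖ - v 2) = 0
    · rcases mul_eq_zero.mp hz with h0 | h0
      · rw [h0]; linarith
      · have : ‖v‖ = v 2 := by linarith
        linarith
    · have hpos : 0 < ‖v‖ * (‖v‖ - v 2) := (mul_nonneg hn0 (by linarith)).lt_of_ne' hz
      nlinarith
  · intro hq
    refine ⟨blochMat_isHermitian q v, fun x => ?_⟩
    rw [blochMat_quadform, Complex.zero_le_real]
    set a := x 0
    set b := x 1
    set w : EuclideanSpace ℝ (Fin 3) :=
      !₂[2*((starRingEnd ℂ) a * b).re, 2*((starRingEnd ℂ) a * b).im,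
        Complex.normSq a - Complex.normSq b] with hw
    have hS0 : (0:ℝ) ≤ Complex.normSq a + Complex.normSq b :=
      add_nonneg (Complex.normSq_nonneg a) (Complex.normSq_nonneg b)
    have hwnorm : ‖w‖ = Complex.normSq a + Complex.normSq b := by
      have h1 : ‖w‖^2 = (Complex.normSq a + Complex.normSq b)^2 := by
        rw [euclidean_norm_sq_eq]
        simp [hw, Complex.normSq_apply, Complex.mul_re, Complex.mul_im]
        ring
      have h2 := congrArg Real.sqrt h1
      rwa [Real.sqrt_sq (norm_nonneg w), Real.sqrt_sq hS0] at h2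
    have hip : (inner ℝ v w : ℝ) = v 0 * (2*((starRingEnd ℂ) a * b).re)
        + v 1 * (2*((starRingEnd ℂ) a * b).im)
        + v 2 * (Complex.normSq a - Complex.normSq b) := by
      simp [PiLp.inner_apply, Fin.sum_univ_three, hw]; ring
    have habs := abs_real_inner_le_norm v w
    rw [hwnorm] at habs
    have h4 : ‖v‖ * (Complex.normSq a + Complex.normSq b)
        ≤ q * (Complex.normSq a + Complex.normSq b) := mul_le_mul_of_nonneg_right hq hS0
    have h5 := (abs_le.mp habs).1
    rw [hip] at h5
    linarith

lemma blochMat_sub (t p : ℝ) (s r : EuclideanSpace ℝ (Fin 3)) :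
    blochMat t s - blochMat p r = blochMat (t - p) (s - r) := by
  ext i j
  fin_cases i <;> fin_cases j <;>
    (simp [blochMat, pauli1, pauli2, pauli3, Matrix.sub_apply, Matrix.smul_apply,
      Matrix.add_apply, Matrix.one_apply, PiLp.sub_apply]; push_cast; ring)

/-- Proposition 1 (Lagrange operator as interior ball): with `p = max_x p_x`,
`σ = M(t, s)` satisfies `σ - ρ x ⪰ 0` for all `x` iff `t ≥ p` and for every `x`
the closed balls `closedBall s (t - p)` and `closedBall (r x) (p - p x)` intersect. -/
theorem blochMat_feasible_iff_interior_ball {X : Type*} [Fintype X] [Nonempty X]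
    (pf : X → ℝ) (rv : X → EuclideanSpace ℝ (Fin 3))
    (ρ : X → Matrix (Fin 2) (Fin 2) ℂ)
    (hρdef : ∀ x, ρ x = blochMat (pf x) (rv x))
    (hρ : ∀ x, (ρ x).PosSemidef)
    (t : ℝ) (s : EuclideanSpace ℝ (Fin 3))
    (σ : Matrix (Fin 2) (Fin 2) ℂ)
    (hσdef : σ = blochMat t s) :
    (∀ x, (σ - ρ x).PosSemidef) ↔
      ((Finset.univ.sup' Finset.univ_nonempty pf) ≤ t ∧
       ∀ x, (Metric.closedBall s (t - Finset.univ.sup' Finset.univ_nonempty pf) ∩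
             Metric.closedBall (rv x) ((Finset.univ.sup' Finset.univ_nonempty pf) - pf x)).Nonempty) := by
  set p := Finset.univ.sup' Finset.univ_nonempty pf with hp
  have key : ∀ x, (σ - ρ x).PosSemidef ↔ dist s (rv x) ≤ t - pf x := by
    intro x
    rw [hσdef, hρdef, blochMat_sub, blochMat_posSemidef_iff, dist_eq_norm]
  simp only [key]
  constructor
  · intro hd
    obtain ⟨x₀, -, hx₀⟩ := Finset.exists_mem_eq_sup' Finset.univ_nonempty pf
    have ht : p ≤ t := by
      have := hd x₀
      have := dist_nonneg (x := s) (y := rv x₀)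
      rw [hp, hx₀]; linarith
    refine ⟨ht, fun x => ?_⟩
    have hpx : pf x ≤ p := Finset.le_sup' pf (Finset.mem_univ x)
    obtain ⟨y, hy1, hy2⟩ := exists_dist_le_le (δ := t - p) (ε := p - pf x)
      (by linarith) (by linarith) (by linarith [hd x] : dist s (rv x) ≤ (p - pf x) + (t - p))
    exact ⟨y, by rw [Metric.mem_closedBall, dist_comm]; exact hy1, Metric.mem_closedBall.2 hy2⟩
  · rintro ⟨ht, hball⟩ x
    obtain ⟨y, hy1, hy2⟩ := hball x
    rw [Metric.mem_closedBall] at hy1 hy2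
    calc dist s (rv x) ≤ dist s y + dist y (rv x) := dist_triangle _ _ _
      _ ≤ (t - p) + (p - pf x) := by rw [dist_comm s y]; exact add_le_add hy1 hy2
      _ = t - pf x := by ring
end

section
/- (Ball-inclusion formulation of dual feasibility for qubits.) Let (ρ_x)_{x∈X} be a finite family of positive semidefinite 2×2 matrices with ρ_x = M(p_x, r_x) (so p_x ≥ 0), and let σ = M(t, s) be Hermitian. Then σ − ρ_x is positive semidefinite for every x ∈ X if and only if for every x ∈ X the closed Euclidean ball closedBall(r_x, p_x) is contained in the closed ball closedBall(s, t) in ℝ³. -/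
open scoped ComplexOrder

lemma quadreal (a c br bi ur ui vr vi : ℝ) (ha : 0 ≤ a) (hc : 0 ≤ c)
    (hb : br^2 + bi^2 ≤ a*c) :
    0 ≤ a*(ur^2+ui^2) + c*(vr^2+vi^2)
      + 2*(br*(ur*vr+ui*vi) + bi*(ui*vr - ur*vi)) := by
  rcases eq_or_lt_of_le ha with ha0 | ha0
  · have hbr : br = 0 := by nlinarith [sq_nonneg br, sq_nonneg bi]
    have hbi : bi = 0 := by nlinarith [sq_nonneg br, sq_nonneg bi]
    subst hbr hbi
    rw [← ha0]
    nlinarith [mul_nonneg hc (add_nonneg (sq_nonneg vr) (sq_nonneg vi))]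
  · nlinarith [sq_nonneg (a*ur + (br*vr - bi*vi)), sq_nonneg (a*ui + (br*vi + bi*vr)),
      mul_nonneg (sub_nonneg.2 hb) (add_nonneg (sq_nonneg vr) (sq_nonneg vi))]

lemma psd2 (a c br bi : ℝ) :
    (!![(a:ℂ), (br:ℂ) + (bi:ℂ)*Complex.I; (br:ℂ) - (bi:ℂ)*Complex.I, (c:ℂ)]).PosSemidef ↔
    0 ≤ a ∧ 0 ≤ c ∧ br^2 + bi^2 ≤ a*c := by
  rw [Matrix.posSemidef_iff_dotProduct_mulVec]
  constructor
  · rintro ⟨-, hq⟩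
    have key : ∀ x : Fin 2 → ℂ,
        0 ≤ (dotProduct (star x)
          (Matrix.mulVec (!![(a:ℂ), (br:ℂ) + (bi:ℂ)*Complex.I; (br:ℂ) - (bi:ℂ)*Complex.I, (c:ℂ)]) x)).re :=
      fun x => (Complex.le_def.mp (hq x)).1
    have h1 := key ![1, 0]
    have h2 := key ![0, 1]
    have h3 := key ![(br:ℂ) + (bi:ℂ)*Complex.I, -(a:ℂ)]
    have h4 := key ![(c:ℂ), -((br:ℂ) - (bi:ℂ)*Complex.I)]
    have h5 := key ![(br:ℂ) + (bi:ℂ)*Complex.I, -1]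
    simp [dotProduct, Matrix.mulVec, Fin.sum_univ_two, Complex.add_re, Complex.mul_re,
      Complex.mul_im, Complex.add_im] at h1 h2 h3 h4 h5
    refine ⟨h1, h2, ?_⟩
    rcases eq_or_lt_of_le h1 with ha0 | ha0
    · rcases eq_or_lt_of_le h2 with hc0 | hc0
      · nlinarith
      · nlinarith
    · nlinarith
  · rintro ⟨ha, hc, hb⟩
    constructor
    · ext i j
      fin_cases i <;> fin_cases j <;>
        simp [Matrix.conjTranspose_apply, Complex.ext_iff]
    · intro x
      rw [Complex.le_def]
      constructor
      · have := quadreal a c br bi (x 0).re (x 0).im (x 1).re (x 1).im ha hc hb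
        simp [dotProduct, Matrix.mulVec, Fin.sum_univ_two, Complex.add_re, Complex.mul_re,
          Complex.mul_im, Complex.add_im]
        nlinarith [this]
      · simp [dotProduct, Matrix.mulVec, Fin.sum_univ_two, Complex.add_re, Complex.mul_re,
          Complex.mul_im, Complex.add_im]
        ring

lemma blochMat_eq (p : ℝ) (r : EuclideanSpace ℝ (Fin 3)) :
    blochMat p r = !![(((p + r 2)/2 : ℝ) : ℂ),
        ((r 0 / 2 : ℝ) : ℂ) + ((-(r 1) / 2 : ℝ) : ℂ) * Complex.I;
      ((r 0 / 2 : ℝ) : ℂ) - ((-(r 1) / 2 : ℝ) : ℂ) * Complex.I,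
        (((p - r 2)/2 : ℝ) : ℂ)] := by
  ext i j
  fin_cases i <;> fin_cases j <;>
    simp [blochMat, pauli1, pauli2, pauli3, Matrix.one_apply] <;> push_cast <;> ring

lemma blochPSD (p : ℝ) (r : EuclideanSpace ℝ (Fin 3)) :
    (blochMat p r).PosSemidef ↔ ‖r‖ ≤ p := by
  rw [blochMat_eq, psd2]
  rw [EuclideanSpace.norm_eq]
  have hsum : ∑ i : Fin 3, ‖r i‖^2 = (r 0)^2 + (r 1)^2 + (r 2)^2 := by
    simp [Fin.sum_univ_three, Real.norm_eq_abs, sq_abs]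
  rw [hsum, Real.sqrt_le_iff]
  constructor
  · rintro ⟨h1, h2, h3⟩
    constructor
    · linarith
    · nlinarith
  · rintro ⟨hp, h⟩
    refine ⟨by nlinarith [sq_nonneg (r 0), sq_nonneg (r 1), sq_nonneg (p - r 2)],
      by nlinarith [sq_nonneg (r 0), sq_nonneg (r 1), sq_nonneg (p + r 2)], by nlinarith⟩

lemma ball_incl (r s : EuclideanSpace ℝ (Fin 3)) (p t : ℝ) (hp : 0 ≤ p) :
    Metric.closedBall r p ⊆ Metric.closedBall s t ↔ dist r s + p ≤ t := by
  constructor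
  · intro h
    by_cases hrs : r = s
    · subst hrs
      have hy : r + p • EuclideanSpace.single (0 : Fin 3) (1:ℝ) ∈ Metric.closedBall r p := by
        rw [Metric.mem_closedBall, dist_eq_norm, add_sub_cancel_left, norm_smul,
          EuclideanSpace.norm_single]
        simp [abs_of_nonneg hp]
      have := h hy
      rw [Metric.mem_closedBall, dist_eq_norm, add_sub_cancel_left, norm_smul,
        EuclideanSpace.norm_single] at this
      simp [abs_of_nonneg hp] at this
      simpa using by linarith
    · have hd : 0 < ‖r - s‖ := by
        rw [norm_pos_iff]; exact sub_ne_zero.mpr hrs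
      set d := ‖r - s‖ with hddef
      have hy : r + (p / d) • (r - s) ∈ Metric.closedBall r p := by
        rw [Metric.mem_closedBall, dist_eq_norm, add_sub_cancel_left, norm_smul]
        rw [Real.norm_eq_abs, abs_of_nonneg (by positivity)]
        rw [← hddef]
        field_simp
        exact le_rfl
      have := h hy
      rw [Metric.mem_closedBall] at this
      have heq : dist (r + (p / d) • (r - s)) s = d + p := by
        rw [dist_eq_norm]
        have : r + (p / d) • (r - s) - s = (1 + p / d) • (r - s) := by
          rw [add_smul, one_smul]; abel
        rw [this, norm_smul, Real.norm_eq_abs, abs_of_nonneg (by positivity)]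
        rw [← hddef]
        field_simp
      rw [heq] at this
      rw [dist_eq_norm]
      linarith
  · intro h
    exact Metric.closedBall_subset_closedBall' (by rw [dist_comm] at h ⊢; linarith)

/-- Ball-inclusion formulation of dual feasibility for qubits: `σ = M(t, s)` satisfies
`σ - ρ x ⪰ 0` for all `x` iff for every `x` the closed ball `closedBall (r x) (p x)`
is contained in `closedBall s t`. -/
theorem blochMat_feasible_iff_ball_inclusion {X : Type*} [Fintype X] [Nonempty X]
    (pf : X → ℝ) (rv : X → EuclideanSpace ℝ (Fin 3))
    (ρ : X → Matrix (Fin 2) (Fin 2) ℂ)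
    (hρdef : ∀ x, ρ x = blochMat (pf x) (rv x))
    (hρ : ∀ x, (ρ x).PosSemidef)
    (t : ℝ) (s : EuclideanSpace ℝ (Fin 3))
    (σ : Matrix (Fin 2) (Fin 2) ℂ)
    (hσdef : σ = blochMat t s) :
    (∀ x, (σ - ρ x).PosSemidef) ↔
      (∀ x, Metric.closedBall (rv x) (pf x) ⊆ Metric.closedBall s t) := by
  have hp : ∀ x, 0 ≤ pf x := fun x =>
    le_trans (norm_nonneg _) ((blochPSD _ _).mp (by rw [← hρdef x]; exact hρ x))
  refine forall_congr' fun x => ?_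
  rw [hσdef, hρdef x, blochMat_sub, blochPSD, ball_incl _ _ _ _ (hp x),
    dist_eq_norm, ← norm_sub_rev]
  constructor <;> intro h <;> linarith
end

section
/- (The full problem is solved by its best small subproblem.) For a discrimination problem (ρ_x)_{x∈X} on ℂ^n, let V(Y) denote the supremum of ∑_{x∈Y} Re Tr(E_x ρ_x) over all POVMs (E_x)_{x∈Y} indexed by a subset Y ⊆ X. Then V(Y) ≤ V(X) for every nonempty Y ⊆ X, and there exists a subset X' ⊆ X with |X'| ≤ n² such that V(X') = V(X). In particular for qubits (n = 2), V(X) = max over subsets X' ⊆ X with |X'| ≤ 4 of V(X'). -/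
open scoped ComplexOrder

/-- The value `V(Y)` of the subproblem of the discrimination problem `(ρ x)_{x ∈ X}`
indexed by a subset `Y ⊆ X`: the supremum of `∑_{x ∈ Y} Re Tr(E x * ρ x)` over all
POVMs `(E x)_{x ∈ Y}` indexed by `Y`. -/
noncomputable def subValue {n : ℕ} {X : Type*} [Fintype X]
    (ρ : X → Matrix (Fin n) (Fin n) ℂ) (Y : Finset X) : ℝ :=
  sSup {p : ℝ | ∃ E : X → Matrix (Fin n) (Fin n) ℂ,
    (∀ x ∈ Y, (E x).PosSemidef) ∧ (∑ x ∈ Y, E x) = 1 ∧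
    p = ∑ x ∈ Y, ((E x * ρ x).trace).re}

namespace QSDaux

open Matrix

variable {n : ℕ}

lemma psd_smul {A : Matrix (Fin n) (Fin n) ℂ} (hA : A.PosSemidef) {r : ℝ} (hr : 0 ≤ r) :
    (r • A).PosSemidef := by
  refine .of_dotProduct_mulVec_nonneg ?_ ?_
  · rw [Matrix.IsHermitian, Matrix.conjTranspose_smul, star_trivial, hA.isHermitian.eq]
  · intro x
    have h0 : (r • A).mulVec x = r • A.mulVec x := by
      ext i; simp [Matrix.mulVec, dotProduct, Finset.smul_sum, mul_assoc]
    rw [h0]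
    have h1 : dotProduct (star x) (r • A.mulVec x)
        = (r : ℂ) * dotProduct (star x) (A.mulVec x) := by
      simp [dotProduct, Finset.mul_sum, Complex.real_smul]
      exact Finset.sum_congr rfl fun i _ => by ring
    rw [h1]
    exact mul_nonneg (Complex.zero_le_real.2 hr) (hA.dotProduct_mulVec_nonneg x)

lemma herm_smul {A : Matrix (Fin n) (Fin n) ℂ} (hA : A.IsHermitian) (r : ℝ) :
    (r • A).IsHermitian := by
  rw [Matrix.IsHermitian, Matrix.conjTranspose_smul, star_trivial, hA.eq]

lemma psd_sum {X : Type*} (s : Finset X) (f : X → Matrix (Fin n) (Fin n) ℂ)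
    (h : ∀ x ∈ s, (f x).PosSemidef) : (∑ x ∈ s, f x).PosSemidef :=
  Finset.sum_induction f _ (fun _ _ ha hb => ha.add hb) Matrix.PosSemidef.zero h

lemma psd_trace_nonneg {A : Matrix (Fin n) (Fin n) ℂ} (hA : A.PosSemidef) : 0 ≤ A.trace := by
  have h : ∀ i, 0 ≤ A i i := by
    intro i
    have := hA.dotProduct_mulVec_nonneg (Pi.single i 1)
    simpa [dotProduct, Matrix.mulVec, Pi.single_apply] using this
  exact Finset.sum_nonneg fun i _ => h i

lemma psd_trace_mul_nonneg {A B : Matrix (Fin n) (Fin n) ℂ} (hA : A.PosSemidef)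
    (hB : B.PosSemidef) : 0 ≤ (A * B).trace := by
  obtain ⟨C, hC⟩ : ∃ C : Matrix (Fin n) (Fin n) ℂ, A = Cᴴ * C := by
    open scoped MatrixOrder Matrix.Norms.L2Operator in
    obtain ⟨B, hB⟩ := CStarAlgebra.nonneg_iff_eq_star_mul_self.mp hA.nonneg
    exact ⟨B, hB⟩
  have h : (A * B).trace = (C * B * Cᴴ).trace := by
    rw [hC, Matrix.mul_assoc, Matrix.trace_mul_comm]
  rw [h]
  exact psd_trace_nonneg (hB.mul_mul_conjTranspose_same C)

lemma psd_neg_eq_zero {A : Matrix (Fin n) (Fin n) ℂ} (hA : A.PosSemidef)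
    (hA' : (-A).PosSemidef) : A = 0 := by
  have hmv : ∀ x, A.mulVec x = 0 := by
    intro x
    refine (hA.dotProduct_mulVec_zero_iff x).mp ?_
    have h2 := hA'.dotProduct_mulVec_nonneg x
    have h3 : dotProduct (star x) ((-A).mulVec x)
        = -dotProduct (star x) (A.mulVec x) := by
      simp [Matrix.neg_mulVec]
    rw [h3] at h2
    exact le_antisymm (neg_nonneg.mp h2) (hA.dotProduct_mulVec_nonneg x)
  ext i j
  have := congrFun (hmv (Pi.single j 1)) i
  simpa [Matrix.mulVec, dotProduct, Pi.single_apply] using this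

/-- The real-linear map on matrices recording real parts on/above the diagonal
and imaginary parts below; it is injective on Hermitian matrices. -/
noncomputable def φ : Matrix (Fin n) (Fin n) ℂ →ₗ[ℝ] (Fin n × Fin n → ℝ) where
  toFun A := fun p => if p.1 ≤ p.2 then (A p.1 p.2).re else (A p.2 p.1).im
  map_add' A B := by ext p; by_cases h : p.1 ≤ p.2 <;> simp [h]
  map_smul' r A := by
    ext p; by_cases h : p.1 ≤ p.2 <;>
      simp [h, Complex.smul_re, Complex.smul_im, smul_eq_mul]

lemma herm_eq_zero {A : Matrix (Fin n) (Fin n) ℂ} (hA : A.IsHermitian)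
    (h : φ A = 0) : A = 0 := by
  have key : ∀ i j : Fin n, i ≤ j → A i j = 0 := by
    intro i j hij
    have hre : (A i j).re = 0 := by
      have := congrFun h (i, j)
      simpa [φ, hij] using this
    have him : (A i j).im = 0 := by
      rcases eq_or_lt_of_le hij with rfl | hlt
      · have := congrFun (congrFun hA.eq i) i
        have h2 : (starRingEnd ℂ) (A i i) = A i i := by
          simpa [Matrix.conjTranspose_apply] using this
        have := congrArg Complex.im h2
        simpa using (by linarith [Complex.conj_im (A i i), this.symm] : (A i i).im = 0)
      · have := congrFun h (j, i)
        simpa [φ, not_le.mpr hlt] using this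
    exact Complex.ext hre him
  ext i j
  rcases le_total i j with hij | hji
  · simpa using key i j hij
  · have h1 := key j i hji
    have := congrFun (congrFun hA.eq j) i
    rw [Matrix.conjTranspose_apply] at this
    simp only [Matrix.zero_apply]
    calc A i j = star (star (A i j)) := (star_star _).symm
      _ = star (A j i) := by rw [this]
      _ = 0 := by rw [h1, star_zero]

section Value

variable {X : Type*} [Fintype X] (ρ : X → Matrix (Fin n) (Fin n) ℂ)

/-- The feasible-value set of the subproblem indexed by `Y`. -/
def S (Y : Finset X) : Set ℝ :=
  {p : ℝ | ∃ E : X → Matrix (Fin n) (Fin n) ℂ,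
    (∀ x ∈ Y, (E x).PosSemidef) ∧ (∑ x ∈ Y, E x) = 1 ∧
    p = ∑ x ∈ Y, ((E x * ρ x).trace).re}

lemma subValue_eq (Y : Finset X) : subValue ρ Y = sSup (S ρ Y) := rfl

variable (hρ : ∀ x, (ρ x).PosSemidef)
include hρ

lemma bddAbove_S (Y : Finset X) : BddAbove (S ρ Y) := by
  classical
  refine ⟨∑ x ∈ Y, ((ρ x).trace).re, ?_⟩
  rintro p ⟨E, hPSD, hsum, rfl⟩
  refine Finset.sum_le_sum fun x hx => ?_
  have h1 : (1 : Matrix (Fin n) (Fin n) ℂ) - E x = ∑ y ∈ Y.erase x, E y := by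
    rw [← hsum, ← Finset.add_sum_erase Y E hx]; abel
  have hpsd1 : ((1 : Matrix (Fin n) (Fin n) ℂ) - E x).PosSemidef := by
    rw [h1]
    exact psd_sum _ _ fun y hy => hPSD y (Finset.mem_of_mem_erase hy)
  have h2 : 0 ≤ (((1 - E x) * ρ x).trace) := psd_trace_mul_nonneg hpsd1 (hρ x)
  have h3 : ((1 - E x : Matrix (Fin n) (Fin n) ℂ) * ρ x).trace
      = (ρ x).trace - (E x * ρ x).trace := by
    rw [Matrix.sub_mul, Matrix.one_mul, Matrix.trace_sub]
  rw [h3] at h2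
  have h4 := (Complex.le_def.mp h2).1
  simp only [Complex.zero_re, Complex.sub_re] at h4
  linarith

lemma le_subValue (Y : Finset X) (E : X → Matrix (Fin n) (Fin n) ℂ)
    (hE : ∀ x ∈ Y, (E x).PosSemidef) (hsum : (∑ x ∈ Y, E x) = 1) :
    ∑ x ∈ Y, ((E x * ρ x).trace).re ≤ subValue ρ Y :=
  le_csSup (bddAbove_S ρ hρ Y) ⟨E, hE, hsum, rfl⟩

omit hρ in
lemma one_ne_zero_mat (hn : 0 < n) : (1 : Matrix (Fin n) (Fin n) ℂ) ≠ 0 := by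
  intro h
  have := congrFun (congrFun h ⟨0, hn⟩) ⟨0, hn⟩
  simp at this

/-- Key reduction: any POVM supported on a set `T` has its value dominated by the
value of a subproblem on at most `n ^ 2` indices. -/
lemma exists_small (hn : 0 < n) :
    ∀ (k : ℕ) (E : X → Matrix (Fin n) (Fin n) ℂ) (T : Finset X),
      (∀ x, (E x).PosSemidef) → (∑ x, E x) = 1 → (∀ x ∉ T, E x = 0) → T.card ≤ k →
      ∃ Y : Finset X, Y.Nonempty ∧ Y.card ≤ n ^ 2 ∧
        (∑ x, ((E x * ρ x).trace).re) ≤ subValue ρ Y := by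
  intro k
  induction k with
  | zero =>
      intro E T hE hsum hT hcard
      exfalso
      have hT0 : T = ∅ := Finset.card_eq_zero.mp (Nat.le_zero.mp hcard)
      have h : (∑ x, E x) = 0 :=
        Finset.sum_eq_zero fun x _ => hT x (by simp [hT0])
      rw [hsum] at h
      exact one_ne_zero_mat hn h
  | succ k ih =>
      intro E T hE hsum hT hcard
      classical
      by_cases hsmall : T.card ≤ n ^ 2
      · -- `T` itself is small enough
        refine ⟨T, ?_, hsmall, ?_⟩
        · rcases Finset.eq_empty_or_nonempty T with rfl | h
          · exfalso
            have h : (∑ x, E x) = 0 := Finset.sum_eq_zero fun x _ => hT x (by simp)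
            rw [hsum] at h
            exact one_ne_zero_mat hn h
          · exact h
        · have hsum' : (∑ x ∈ T, E x) = 1 := by
            rw [← hsum]
            exact Finset.sum_subset (Finset.subset_univ T) fun x _ hx => hT x hx
          have hval : (∑ x, ((E x * ρ x).trace).re)
              = ∑ x ∈ T, ((E x * ρ x).trace).re := by
            refine (Finset.sum_subset (Finset.subset_univ T) fun x _ hx => ?_).symm
            rw [hT x hx]; simp
          rw [hval]
          exact le_subValue ρ hρ T E (fun x _ => hE x) hsum'
      · -- `T` is too large: find a linear dependence
        push_neg at hsmall
        have hdep : ¬ LinearIndependent ℝ (fun x : {y // y ∈ T} => φ (E x.1)) := by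
          intro hLI
          have h1 := hLI.fintype_card_le_finrank
          rw [Module.finrank_fintype_fun_eq_card, Fintype.card_prod, Fintype.card_fin,
            Fintype.card_coe] at h1
          have : n * n = n ^ 2 := (sq n).symm
          omega
        obtain ⟨g, hg0, i0, hgi0⟩ := Fintype.not_linearIndependent_iff.mp hdep
        set c : X → ℝ := fun x => if h : x ∈ T then g ⟨x, h⟩ else 0 with hc
        have hcsum : (∑ x ∈ T, c x • E x) = 0 := by
          apply herm_eq_zero
          · exact Finset.sum_induction _ _ (fun _ _ ha hb => ha.add hb)
              Matrix.isHermitian_zero fun x hx => herm_smul (hE x).isHermitian _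
          · rw [map_sum]
            have h1 : ∀ x ∈ T, φ (c x • E x) = c x • φ (E x) :=
              fun x _ => map_smul φ _ _
            rw [Finset.sum_congr rfl h1, ← Finset.sum_coe_sort T fun x => c x • φ (E x)]
            rw [← hg0]
            refine Finset.sum_congr rfl fun x _ => ?_
            simp [hc]
        set w : ℝ := ∑ x ∈ T, c x * ((E x * ρ x).trace).re with hw
        set d : X → ℝ := if w ≤ 0 then c else fun x => -(c x) with hd
        have hdT : ∀ x ∉ T, d x = 0 := by
          intro x hx
          have h1 : c x = 0 := by simp [hc, hx]
          by_cases h : w ≤ 0 <;> simp [hd, h, h1]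
        have hdsum : (∑ x ∈ T, d x • E x) = 0 := by
          by_cases h : w ≤ 0
          · simpa [hd, h] using hcsum
          · simp only [hd, h, if_false]
            rw [show (∑ x ∈ T, -(c x) • E x) = -(∑ x ∈ T, c x • E x) by
              rw [← Finset.sum_neg_distrib]
              exact Finset.sum_congr rfl fun x _ => by rw [neg_smul]]
            rw [hcsum, neg_zero]
        have hdw : (∑ x ∈ T, d x * ((E x * ρ x).trace).re) ≤ 0 := by
          by_cases h : w ≤ 0
          · simpa [hd, h, ← hw] using h
          · simp only [hd, h, if_false]
            rw [show (∑ x ∈ T, -(c x) * ((E x * ρ x).trace).re) = -w by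
              rw [hw, ← Finset.sum_neg_distrib]
              exact Finset.sum_congr rfl fun x _ => by ring]
            linarith [not_le.mp h]
        have hdne : d (i0 : X) ≠ 0 := by
          have h1 : c (i0 : X) ≠ 0 := by simpa [hc] using hgi0
          by_cases h : w ≤ 0 <;> simp [hd, h, h1]
        by_cases hpos : ∃ x ∈ T, 0 < d x
        · -- shrink the support at a minimizing index
          set P := T.filter (fun x => 0 < d x) with hPdef
          have hPne : P.Nonempty := by
            obtain ⟨x, hx, hdx⟩ := hpos
            exact ⟨x, by simp [hPdef, hx, hdx]⟩
          obtain ⟨xs, hxsP, hxsmin⟩ := Finset.exists_min_image P (fun x => (d x)⁻¹) hPne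
          have hxsT : xs ∈ T := (Finset.mem_filter.mp hxsP).1
          have hdxs : 0 < d xs := (Finset.mem_filter.mp hxsP).2
          set t : ℝ := (d xs)⁻¹ with htdef
          have ht : 0 < t := inv_pos.mpr hdxs
          have hcoef : ∀ x, 0 ≤ 1 - t * d x := by
            intro x
            by_cases hx : 0 < d x
            · by_cases hxT : x ∈ T
              · have hxP : x ∈ P := by simp [hPdef, hxT, hx]
                have h1 := hxsmin x hxP
                have h2 : t * d x ≤ (d x)⁻¹ * d x :=
                  mul_le_mul_of_nonneg_right h1 (le_of_lt hx)
                rw [inv_mul_cancel₀ (ne_of_gt hx)] at h2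
                linarith
              · have h1 : d x = 0 := hdT x hxT
                rw [h1]; norm_num
            · push_neg at hx
              nlinarith
          set E₂ : X → Matrix (Fin n) (Fin n) ℂ := fun x => (1 - t * d x) • E x with hE₂
          have hE₂psd : ∀ x, (E₂ x).PosSemidef := fun x => psd_smul (hE x) (hcoef x)
          have hdsum_univ : (∑ x, d x • E x) = 0 := by
            rw [← hdsum]
            refine (Finset.sum_subset (Finset.subset_univ T) fun x _ hx => ?_).symm
            rw [hT x hx, smul_zero]
          have hE₂sum : (∑ x, E₂ x) = 1 := by
            have h1 : ∀ x : X, E₂ x = E x - t • (d x • E x) := fun x => by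
              show (1 - t * d x) • E x = _
              rw [sub_smul, one_smul, smul_smul]
            rw [Finset.sum_congr rfl fun x _ => h1 x, Finset.sum_sub_distrib,
              ← Finset.smul_sum, hdsum_univ, smul_zero, sub_zero, hsum]
          have hE₂xs : E₂ xs = 0 := by
            rw [hE₂]
            simp only
            rw [htdef, inv_mul_cancel₀ (ne_of_gt hdxs), sub_self, zero_smul]
          have hE₂T : ∀ x ∉ T.erase xs, E₂ x = 0 := by
            intro x hx
            by_cases hxx : x = xs
            · rw [hxx]; exact hE₂xs
            · have hxT : x ∉ T := by
                intro hxT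
                exact hx (Finset.mem_erase.mpr ⟨hxx, hxT⟩)
              rw [hE₂]; simp only; rw [hT x hxT, smul_zero]
          have hcard' : (T.erase xs).card ≤ k := by
            rw [Finset.card_erase_of_mem hxsT]
            omega
          obtain ⟨Y, hYne, hYcard, hYle⟩ := ih E₂ (T.erase xs) hE₂psd hE₂sum hE₂T hcard'
          refine ⟨Y, hYne, hYcard, le_trans ?_ hYle⟩
          -- the value does not decrease
          have hterm : ∀ x : X, ((E₂ x * ρ x).trace).re
              = ((E x * ρ x).trace).re - t * (d x * ((E x * ρ x).trace).re) := by
            intro x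
            rw [hE₂]
            simp only
            rw [smul_mul_assoc, Matrix.trace_smul, Complex.smul_re, smul_eq_mul]
            ring
          have hsplit : (∑ x, ((E₂ x * ρ x).trace).re)
              = (∑ x, ((E x * ρ x).trace).re)
                - t * ∑ x, d x * ((E x * ρ x).trace).re := by
            rw [Finset.sum_congr rfl fun x _ => hterm x, Finset.sum_sub_distrib,
              Finset.mul_sum]
          have hduniv : (∑ x, d x * ((E x * ρ x).trace).re)
              = ∑ x ∈ T, d x * ((E x * ρ x).trace).re := by
            refine (Finset.sum_subset (Finset.subset_univ T) fun x _ hx => ?_).symm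
            rw [hT x hx]; simp
          rw [hsplit, hduniv]
          nlinarith
        · -- no positive coefficient: some `E x` vanishes on `T`, shrink `T`
          push_neg at hpos
          set e : X → ℝ := fun x => -(d x) with he
          have hesum : (∑ x ∈ T, e x • E x) = 0 := by
            rw [show (∑ x ∈ T, e x • E x) = -(∑ x ∈ T, d x • E x) by
              rw [← Finset.sum_neg_distrib]
              exact Finset.sum_congr rfl fun x _ => by rw [he]; rw [neg_smul]]
            rw [hdsum, neg_zero]
          have hei0 : 0 < e (i0 : X) := by
            have h1 := hpos (i0 : X) i0.2
            have h2 : d (i0 : X) < 0 := lt_of_le_of_ne h1 hdne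
            simp [he]; linarith
          have hkey : e (i0 : X) • E (i0 : X) = 0 := by
            apply psd_neg_eq_zero (psd_smul (hE _) (le_of_lt hei0))
            have heq : -(e (i0 : X) • E (i0 : X)) = ∑ x ∈ T.erase (i0 : X), e x • E x := by
              have h1 := Finset.add_sum_erase T (fun x => e x • E x) i0.2
              rw [hesum] at h1
              linear_combination (norm := abel) -h1
            rw [heq]
            refine psd_sum _ _ fun x hx => ?_
            have hxT := Finset.mem_of_mem_erase hx
            have h2 : 0 ≤ e x := by
              have := hpos x hxT
              simp [he]; linarith
            exact psd_smul (hE x) h2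
          have hEi0 : E (i0 : X) = 0 := by
            rcases smul_eq_zero.mp hkey with h | h
            · exact absurd h (ne_of_gt hei0)
            · exact h
          have hT' : ∀ x ∉ T.erase (i0 : X), E x = 0 := by
            intro x hx
            by_cases hxx : x = (i0 : X)
            · rw [hxx]; exact hEi0
            · exact hT x fun hxT => hx (Finset.mem_erase.mpr ⟨hxx, hxT⟩)
          have hcard' : (T.erase (i0 : X)).card ≤ k := by
            rw [Finset.card_erase_of_mem i0.2]
            omega
          exact ih E (T.erase (i0 : X)) hE hsum hT' hcard'

end Value

end QSDaux

/-- The full problem is solved by its best small subproblem: `V(Y) ≤ V(X)` for every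
nonempty `Y ⊆ X`, and there is a subset `X' ⊆ X` with `|X'| ≤ n²` and `V(X') = V(X)`. -/
theorem qsd_best_small_subproblem {n : ℕ} {X : Type*} [Fintype X] [Nonempty X]
    (ρ : X → Matrix (Fin n) (Fin n) ℂ)
    (hρ : ∀ x, (ρ x).PosSemidef)
    (hρtr : (∑ x, (ρ x).trace) = 1) :
    (∀ Y : Finset X, Y.Nonempty → subValue ρ Y ≤ subValue ρ Finset.univ) ∧
    (∃ X' : Finset X, X'.card ≤ n ^ 2 ∧ subValue ρ X' = subValue ρ Finset.univ) := by
  classical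
  have hSne : ∀ Y : Finset X, Y.Nonempty → (QSDaux.S ρ Y).Nonempty := by
    intro Y ⟨y0, hy0⟩
    refine ⟨_, fun x => if x = y0 then 1 else 0, fun x _ => ?_, ?_, rfl⟩
    · by_cases h : x = y0 <;> simp [h, Matrix.PosSemidef.one, Matrix.PosSemidef.zero]
    · rw [Finset.sum_ite_eq' Y y0 fun _ => (1 : Matrix (Fin n) (Fin n) ℂ)]
      simp [hy0]
  have part1 : ∀ Y : Finset X, Y.Nonempty → subValue ρ Y ≤ subValue ρ Finset.univ := by
    intro Y hY
    have hsub : QSDaux.S ρ Y ⊆ QSDaux.S ρ (Finset.univ : Finset X) := by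
      rintro p ⟨E, hE, hsum, rfl⟩
      refine ⟨fun x => if x ∈ Y then E x else 0, fun x _ => ?_, ?_, ?_⟩
      · by_cases h : x ∈ Y
        · simpa [h] using hE x h
        · simp [h, Matrix.PosSemidef.zero]
      · rw [Finset.sum_ite_mem, Finset.univ_inter, hsum]
      · rw [show (∑ x, (((if x ∈ Y then E x else 0) * ρ x).trace).re)
            = ∑ x, (if x ∈ Y then ((E x * ρ x).trace).re else 0) from
            Finset.sum_congr rfl fun x _ => by by_cases h : x ∈ Y <;> simp [h]]
        rw [Finset.sum_ite_mem, Finset.univ_inter]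
    exact csSup_le_csSup (QSDaux.bddAbove_S ρ hρ _) (hSne Y hY) hsub
  refine ⟨part1, ?_⟩
  by_cases hn : 0 < n
  · -- the main case
    obtain ⟨x0⟩ := ‹Nonempty X›
    have hn2 : 1 ≤ n ^ 2 := Nat.one_le_pow _ _ hn
    set 𝒞 : Finset (Finset X) :=
      Finset.univ.filter (fun Y => Y.Nonempty ∧ Y.card ≤ n ^ 2) with h𝒞
    have h𝒞ne : 𝒞.Nonempty := by
      refine ⟨{x0}, ?_⟩
      simp [h𝒞, hn2, Finset.singleton_nonempty]
    obtain ⟨X', hX'mem, hX'max⟩ := Finset.exists_max_image 𝒞 (subValue ρ) h𝒞ne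
    have hX'props := (Finset.mem_filter.mp hX'mem).2
    refine ⟨X', hX'props.2, le_antisymm (part1 X' hX'props.1) ?_⟩
    rw [QSDaux.subValue_eq ρ (Finset.univ : Finset X)]
    apply csSup_le (hSne Finset.univ Finset.univ_nonempty)
    rintro p ⟨E, hE, hsum, rfl⟩
    obtain ⟨Y, hYne, hYcard, hYle⟩ :=
      QSDaux.exists_small ρ hρ hn (Fintype.card X) E Finset.univ
        (fun x => hE x (Finset.mem_univ x)) hsum
        (fun x hx => absurd (Finset.mem_univ x) hx)
        (le_of_eq (Finset.card_univ))
    refine hYle.trans (hX'max Y ?_)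
    exact Finset.mem_filter.mpr ⟨Finset.mem_univ Y, hYne, hYcard⟩
  · -- the degenerate case `n = 0`
    have hn0 : n = 0 := by omega
    subst hn0
    have hmat : ∀ A B : Matrix (Fin 0) (Fin 0) ℂ, A = B := by
      intro A B; ext i; exact i.elim0
    have htr : ∀ A : Matrix (Fin 0) (Fin 0) ℂ, A.trace = 0 := by
      intro A; simp [Matrix.trace]
    have hS : ∀ Y : Finset X, QSDaux.S ρ Y = {0} := by
      intro Y
      ext p
      constructor
      · rintro ⟨E, hE, hsum, rfl⟩
        simp only [Set.mem_singleton_iff]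
        refine Finset.sum_eq_zero fun x _ => ?_
        rw [htr]; simp
      · rintro rfl
        refine ⟨fun _ => 0, fun x _ => Matrix.PosSemidef.zero, hmat _ _, ?_⟩
        refine (Finset.sum_eq_zero fun x _ => ?_).symm
        rw [htr]; simp
    refine ⟨∅, by simp, ?_⟩
    rw [QSDaux.subValue_eq, QSDaux.subValue_eq, hS, hS]
end

section
/- (Rank bound from complementary slackness.) Let σ be a Hermitian matrix with σ − ρ_x positive semidefinite for every x ∈ X and Re Tr(σ) = P_guess (the Lagrange operator), and let (E_x)_{x∈X} be an optimal POVM. Then for every x ∈ X the range of E_x is contained in the kernel of σ − ρ_x; in particular rank(E_x) ≤ n − rank(σ − ρ_x). -/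
open scoped ComplexOrder

open Matrix

lemma trace_conjTranspose_mul_self_re {m : ℕ} (C : Matrix (Fin m) (Fin m) ℂ) :
    ((Cᴴ * C).trace).re = ∑ j, ∑ i, Complex.normSq (C i j) := by
  simp only [Matrix.trace, Matrix.diag, Matrix.mul_apply, Matrix.conjTranspose_apply,
    Complex.re_sum]
  refine Finset.sum_congr rfl fun j _ => Finset.sum_congr rfl fun i _ => ?_
  have : star (C i j) * C i j = (Complex.normSq (C i j) : ℂ) := by
    rw [Complex.star_def, ← Complex.normSq_eq_conj_mul_self]
  rw [this, Complex.ofReal_re]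

lemma trace_conjTranspose_mul_self_re_nonneg {m : ℕ} (C : Matrix (Fin m) (Fin m) ℂ) :
    0 ≤ ((Cᴴ * C).trace).re := by
  rw [trace_conjTranspose_mul_self_re]
  exact Finset.sum_nonneg fun j _ => Finset.sum_nonneg fun i _ => Complex.normSq_nonneg _

lemma eq_zero_of_trace_conjTranspose_mul_self {m : ℕ} (C : Matrix (Fin m) (Fin m) ℂ)
    (h : ((Cᴴ * C).trace).re = 0) : C = 0 := by
  rw [trace_conjTranspose_mul_self_re] at h
  ext i j
  have h1 : ∀ j ∈ Finset.univ (α := Fin m), 0 ≤ ∑ i, Complex.normSq (C i j) :=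
    fun j _ => Finset.sum_nonneg fun i _ => Complex.normSq_nonneg _
  have h2 := (Finset.sum_eq_zero_iff_of_nonneg h1).mp h j (Finset.mem_univ j)
  have h3 : ∀ i ∈ Finset.univ (α := Fin m), 0 ≤ Complex.normSq (C i j) :=
    fun i _ => Complex.normSq_nonneg _
  have h4 := (Finset.sum_eq_zero_iff_of_nonneg h3).mp h2 i (Finset.mem_univ i)
  simpa [Complex.normSq_eq_zero] using h4

lemma trace_cyclic_four {m : ℕ} (S T : Matrix (Fin m) (Fin m) ℂ) :
    (S * S * (T * T)).trace = ((T * S) * (S * T)).trace := by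
  rw [← mul_assoc, Matrix.trace_mul_comm]
  simp only [mul_assoc]

open scoped MatrixOrder in
/-- For PSD matrices, the slack trace rewrites as `Tr(Cᴴ C)` with `C = √B √A`. -/
lemma trace_psd_mul_eq {m : ℕ} {A B : Matrix (Fin m) (Fin m) ℂ}
    (hA : A.PosSemidef) (hB : B.PosSemidef) :
    (B * A).trace = (((CFC.sqrt B * CFC.sqrt A)ᴴ) * (CFC.sqrt B * CFC.sqrt A)).trace := by
  rw [conjTranspose_mul, (CFC.sqrt_nonneg B).posSemidef.1, (CFC.sqrt_nonneg A).posSemidef.1]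
  calc (B * A).trace = (CFC.sqrt B * CFC.sqrt B * (CFC.sqrt A * CFC.sqrt A)).trace := by
        rw [CFC.sqrt_mul_sqrt_self B hB.nonneg, CFC.sqrt_mul_sqrt_self A hA.nonneg]
    _ = ((CFC.sqrt A * CFC.sqrt B) * (CFC.sqrt B * CFC.sqrt A)).trace := trace_cyclic_four _ _

lemma trace_psd_mul_re_nonneg {m : ℕ} {A B : Matrix (Fin m) (Fin m) ℂ}
    (hA : A.PosSemidef) (hB : B.PosSemidef) : 0 ≤ ((B * A).trace).re := by
  rw [trace_psd_mul_eq hA hB]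
  exact trace_conjTranspose_mul_self_re_nonneg _

open scoped MatrixOrder in
/-- If `A`, `B` are PSD and `Re Tr(B * A) = 0` then `A * B = 0`. -/
lemma mul_eq_zero_of_psd_trace {m : ℕ} {A B : Matrix (Fin m) (Fin m) ℂ}
    (hA : A.PosSemidef) (hB : B.PosSemidef)
    (h : ((B * A).trace).re = 0) : A * B = 0 := by
  set S := CFC.sqrt B with hS
  set T := CFC.sqrt A with hT
  have hSh : Sᴴ = S := (CFC.sqrt_nonneg B).posSemidef.1
  have hTh : Tᴴ = T := (CFC.sqrt_nonneg A).posSemidef.1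
  rw [trace_psd_mul_eq hA hB] at h
  have hST : S * T = 0 := eq_zero_of_trace_conjTranspose_mul_self _ h
  have hTS : T * S = 0 := by
    calc T * S = (S * T)ᴴ := by rw [conjTranspose_mul, hSh, hTh]
    _ = 0 := by rw [hST]; simp
  calc A * B = T * T * (S * S) := by rw [CFC.sqrt_mul_sqrt_self A hA.nonneg, CFC.sqrt_mul_sqrt_self B hB.nonneg]
  _ = T * ((T * S) * S) := by simp only [mul_assoc]
  _ = 0 := by rw [hTS]; simp

/-- Rank bound from complementary slackness: if `σ` is the Lagrange operator and `E` an
optimal POVM, then for every `x` the range of `E x` is contained in the kernel of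
`σ - ρ x`; in particular `rank (E x) ≤ n - rank (σ - ρ x)`. -/
theorem qsd_rank_bound {n : ℕ} {X : Type*} [Fintype X] [Nonempty X]
    (ρ : X → Matrix (Fin n) (Fin n) ℂ)
    (hρ : ∀ x, (ρ x).PosSemidef)
    (hρtr : (∑ x, (ρ x).trace) = 1)
    (σ : Matrix (Fin n) (Fin n) ℂ)
    (hσ : σ.IsHermitian)
    (hfeas : ∀ x, (σ - ρ x).PosSemidef)
    (hσtr : (σ.trace).re =
      sSup {p : ℝ | ∃ G : X → Matrix (Fin n) (Fin n) ℂ,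
        (∀ x, (G x).PosSemidef) ∧ (∑ x, G x) = 1 ∧
        p = ∑ x, ((G x * ρ x).trace).re})
    (E : X → Matrix (Fin n) (Fin n) ℂ)
    (hE : ∀ x, (E x).PosSemidef) (hEsum : (∑ x, E x) = 1)
    (hEopt : (∑ x, ((E x * ρ x).trace).re) =
      sSup {p : ℝ | ∃ G : X → Matrix (Fin n) (Fin n) ℂ,
        (∀ x, (G x).PosSemidef) ∧ (∑ x, G x) = 1 ∧
        p = ∑ x, ((G x * ρ x).trace).re}) :
    ∀ x, LinearMap.range (E x).mulVecLin ≤ LinearMap.ker (σ - ρ x).mulVecLin ∧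
      (E x).rank ≤ n - (σ - ρ x).rank := by
  -- the total slack is zero
  have hsum : ∑ x, ((E x * (σ - ρ x)).trace).re = 0 := by
    have h1 : ∑ x, (E x * (σ - ρ x)).trace = σ.trace - ∑ x, (E x * ρ x).trace := by
      have : ∑ x, (E x * σ).trace = σ.trace := by
        rw [← Matrix.trace_sum, ← Finset.sum_mul, hEsum, one_mul]
      simp only [Matrix.mul_sub, Matrix.trace_sub, Finset.sum_sub_distrib, this]
    calc ∑ x, ((E x * (σ - ρ x)).trace).re = (∑ x, (E x * (σ - ρ x)).trace).re := by
          rw [Complex.re_sum]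
      _ = (σ.trace).re - ∑ x, ((E x * ρ x).trace).re := by
          rw [h1, Complex.sub_re, Complex.re_sum]
      _ = 0 := by rw [hσtr, hEopt, sub_self]
  -- hence each slack term is zero
  have hterm : ∀ x, ((E x * (σ - ρ x)).trace).re = 0 := by
    intro x
    have hnn : ∀ y ∈ Finset.univ (α := X), 0 ≤ ((E y * (σ - ρ y)).trace).re :=
      fun y _ => trace_psd_mul_re_nonneg (hfeas y) (hE y)
    exact (Finset.sum_eq_zero_iff_of_nonneg hnn).mp hsum x (Finset.mem_univ x)
  intro x
  have hzero : (σ - ρ x) * E x = 0 :=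
    mul_eq_zero_of_psd_trace (hfeas x) (hE x) (hterm x)
  constructor
  · rintro v ⟨u, rfl⟩
    simp only [LinearMap.mem_ker, Matrix.mulVecLin_apply, Matrix.mulVec_mulVec, hzero]
    simp
  · have := Matrix.rank_add_rank_le_card_of_mul_eq_zero hzero
    simp only [Fintype.card_fin] at this
    omega
end

section
/- (Optimal qubit measurements have rank-one elements.) Let (ρ_x)_{x∈X} be a discrimination problem on ℂ² and let σ be a Hermitian 2×2 matrix with σ − ρ_x positive semidefinite for all x ∈ X and Re Tr(σ) = P_guess. If σ ≠ ρ_x for every x ∈ X, then every optimal POVM (E_x)_{x∈X} satisfies rank(E_x) ≤ 1 for every x ∈ X. -/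
open scoped ComplexOrder
open Matrix

lemma trace_re_eq (M : Matrix (Fin 2) (Fin 2) ℂ) :
    ((Mᴴ * M).trace).re = ∑ i, ∑ j, Complex.normSq (M j i) := by
  simp [Matrix.trace, Matrix.diag, Matrix.mul_apply, Matrix.conjTranspose_apply,
    Complex.normSq_apply, Complex.mul_re, Fin.sum_univ_two]

lemma trace_re_nonneg (M : Matrix (Fin 2) (Fin 2) ℂ) : 0 ≤ ((Mᴴ * M).trace).re := by
  rw [trace_re_eq]
  exact Finset.sum_nonneg fun i _ => Finset.sum_nonneg fun j _ => Complex.normSq_nonneg _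

lemma eq_zero_of_trace_re (M : Matrix (Fin 2) (Fin 2) ℂ)
    (h : ((Mᴴ * M).trace).re = 0) : M = 0 := by
  rw [trace_re_eq] at h
  ext j i
  have h1 := (Finset.sum_eq_zero_iff_of_nonneg (fun i _ => Finset.sum_nonneg
    (fun j _ => Complex.normSq_nonneg _))).mp h i (Finset.mem_univ i)
  have h2 := (Finset.sum_eq_zero_iff_of_nonneg
    (fun j _ => Complex.normSq_nonneg _)).mp h1 j (Finset.mem_univ j)
  simpa using Complex.normSq_eq_zero.mp h2

lemma rank_pos_of_ne_zero {A : Matrix (Fin 2) (Fin 2) ℂ} (h : A ≠ 0) : 1 ≤ A.rank := by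
  by_contra hc
  push_neg at hc
  interval_cases hr : A.rank
  apply h
  have : LinearMap.range A.mulVecLin = ⊥ := by
    rw [← Submodule.finrank_eq_zero]
    exact hr
  have h0 : A.mulVecLin = 0 := LinearMap.range_eq_bot.mp this
  ext i j
  have := congrFun (congrArg (fun f => f) (congrFun (congrArg DFunLike.coe h0) (Pi.single j 1))) i
  simpa [Matrix.mulVecLin, Matrix.mulVec_single] using this

open scoped MatrixOrder in
noncomputable def Matrix.PosSemidef.sqrt {A : Matrix (Fin 2) (Fin 2) ℂ} (_hA : A.PosSemidef) :
    Matrix (Fin 2) (Fin 2) ℂ := CFC.sqrt A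

open scoped MatrixOrder in
lemma Matrix.PosSemidef.posSemidef_sqrt {A : Matrix (Fin 2) (Fin 2) ℂ} (hA : A.PosSemidef) :
    hA.sqrt.PosSemidef :=
  Matrix.nonneg_iff_posSemidef.mp (CFC.sqrt_nonneg A)

open scoped MatrixOrder in
lemma Matrix.PosSemidef.sqrt_mul_self {A : Matrix (Fin 2) (Fin 2) ℂ} (hA : A.PosSemidef) :
    hA.sqrt * hA.sqrt = A :=
  CFC.sqrt_mul_sqrt_self A (Matrix.nonneg_iff_posSemidef.mpr hA)

lemma psd_mul_key {A B : Matrix (Fin 2) (Fin 2) ℂ} (hA : A.PosSemidef) (hB : B.PosSemidef) :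
    (A * B).trace = ((hA.sqrt * hB.sqrt)ᴴ * (hA.sqrt * hB.sqrt)).trace := by
  have hBA : hB.sqrt * hA.sqrt = (hA.sqrt * hB.sqrt)ᴴ := by
    rw [conjTranspose_mul, hA.posSemidef_sqrt.1, hB.posSemidef_sqrt.1]
  calc (A * B).trace = (hA.sqrt * (hA.sqrt * B)).trace := by
        conv_lhs => rw [← hA.sqrt_mul_self]
        rw [mul_assoc]
    _ = ((hA.sqrt * B) * hA.sqrt).trace := Matrix.trace_mul_comm _ _
    _ = ((hA.sqrt * hB.sqrt) * (hB.sqrt * hA.sqrt)).trace := by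
        conv_lhs => rw [← hB.sqrt_mul_self]
        rw [← mul_assoc, ← mul_assoc, mul_assoc _ _ hA.sqrt]
    _ = ((hA.sqrt * hB.sqrt)ᴴ * (hA.sqrt * hB.sqrt)).trace := by
        rw [hBA, Matrix.trace_mul_comm]

lemma psd_mul_trace_re_nonneg {A B : Matrix (Fin 2) (Fin 2) ℂ} (hA : A.PosSemidef)
    (hB : B.PosSemidef) : 0 ≤ ((A * B).trace).re := by
  rw [psd_mul_key hA hB]; exact trace_re_nonneg _

lemma psd_mul_eq_zero {A B : Matrix (Fin 2) (Fin 2) ℂ} (hA : A.PosSemidef)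
    (hB : B.PosSemidef) (h : ((A * B).trace).re = 0) : A * B = 0 := by
  rw [psd_mul_key hA hB] at h
  have hM := eq_zero_of_trace_re _ h
  conv_lhs => rw [← hA.sqrt_mul_self, ← hB.sqrt_mul_self]
  rw [mul_assoc, ← mul_assoc hA.sqrt hB.sqrt, hM]
  simp

/-- Optimal qubit measurements have rank-one elements: if `σ` is the Lagrange operator
of a qubit discrimination problem and `σ ≠ ρ x` for every `x`, then every optimal POVM
`E` satisfies `rank (E x) ≤ 1` for every `x`. -/
theorem qsd_qubit_optimal_rank_one {X : Type*} [Fintype X] [Nonempty X]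
    (ρ : X → Matrix (Fin 2) (Fin 2) ℂ)
    (hρ : ∀ x, (ρ x).PosSemidef)
    (hρtr : (∑ x, (ρ x).trace) = 1)
    (σ : Matrix (Fin 2) (Fin 2) ℂ)
    (hσ : σ.IsHermitian)
    (hfeas : ∀ x, (σ - ρ x).PosSemidef)
    (hσtr : (σ.trace).re =
      sSup {p : ℝ | ∃ G : X → Matrix (Fin 2) (Fin 2) ℂ,
        (∀ x, (G x).PosSemidef) ∧ (∑ x, G x) = 1 ∧
        p = ∑ x, ((G x * ρ x).trace).re})
    (hne : ∀ x, σ ≠ ρ x)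
    (E : X → Matrix (Fin 2) (Fin 2) ℂ)
    (hE : ∀ x, (E x).PosSemidef) (hEsum : (∑ x, E x) = 1)
    (hEopt : (∑ x, ((E x * ρ x).trace).re) =
      sSup {p : ℝ | ∃ G : X → Matrix (Fin 2) (Fin 2) ℂ,
        (∀ x, (G x).PosSemidef) ∧ (∑ x, G x) = 1 ∧
        p = ∑ x, ((G x * ρ x).trace).re}) :
    ∀ x, (E x).rank ≤ 1 := by
  have hopt : (∑ x, ((E x * ρ x).trace).re) = (σ.trace).re := hEopt.trans hσtr.symm
  have hsumσ : ∑ x, ((E x * σ).trace) = σ.trace := by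
    rw [← Matrix.trace_sum, ← Finset.sum_mul, hEsum, one_mul]
  have key : ∑ x, (((σ - ρ x) * E x).trace).re = 0 := by
    have h1 : ∀ x, (((σ - ρ x) * E x).trace).re
        = ((E x * σ).trace).re - ((E x * ρ x).trace).re := by
      intro x
      rw [Matrix.trace_mul_comm, Matrix.mul_sub, Matrix.trace_sub, Complex.sub_re]
    rw [Finset.sum_congr rfl fun x _ => h1 x, Finset.sum_sub_distrib,
      ← Complex.re_sum, hsumσ, hopt, sub_self]
  intro x
  have hx0 : (((σ - ρ x) * E x).trace).re = 0 :=
    (Finset.sum_eq_zero_iff_of_nonneg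
      (fun y _ => psd_mul_trace_re_nonneg (hfeas y) (hE y))).mp key x (Finset.mem_univ x)
  have hz : (σ - ρ x) * E x = 0 := psd_mul_eq_zero (hfeas x) (hE x) hx0
  have h2 := Matrix.rank_add_rank_le_card_of_mul_eq_zero hz
  have h3 := rank_pos_of_ne_zero (A := σ - ρ x) (sub_ne_zero.mpr (hne x))
  simp only [Fintype.card_fin] at h2
  omega
end
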